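/- arXiv:1511.03568 — 7 statements merged into one kernel-verified Lean document; each statement's English description precedes it below -/
import Mathlib

section
/- Let G be an undirected graph (a finite connected loopless multigraph) and let f be a divisor on G. Then rank(f) − rank(K_G − f) = deg(f) − g + 1, where g = m(G) − |V(G)| + 1 is the genus of G (m(G) denoting the number of undirected edges) and K_G is the canonical divisor defined by K_G(v) = d(v) − 2 for each vertex v. -/
open Finset

variable {V : Type} [Fintype V] [DecidableEq V]

/-- The outdegree of a vertex `v` in the multidigraph with multiplicity function `m`
(`m u v` is the number of directed edges from `u` to `v`). -/
def outdeg (m : V → V → ℕ) (v : V) : ℤ := ∑ u, (m v u : ℤ)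

/-- The indegree of a vertex. -/
def indeg (m : V → V → ℕ) (v : V) : ℤ := ∑ u, (m u v : ℤ)

/-- The digraph is loopless. -/
def Loopless (m : V → V → ℕ) : Prop := ∀ v, m v v = 0

/-- The digraph is strongly connected: every vertex reaches every vertex on a directed path. -/
def StronglyConnected (m : V → V → ℕ) : Prop :=
  ∀ u v : V, Relation.ReflTransGen (fun a b => 0 < m a b) u v

/-- Firing vertex `v` in chip-distribution `x`: `v` sends a chip along each outgoing edge. -/
def fire (m : V → V → ℕ) (x : V → ℤ) (v : V) : V → ℤ :=
  fun u => x u + (m v u : ℤ) - (if u = v then outdeg m v else 0)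

/-- The degree (total number of chips) of a chip-distribution / divisor. -/
def degSum (x : V → ℤ) : ℤ := ∑ v, x v

/-- The state of the chip-firing game after `n` steps, starting from `x` and
firing the vertices `s 0, s 1, …` in this order. -/
def gameState (m : V → V → ℕ) (x : V → ℤ) (s : ℕ → V) : ℕ → (V → ℤ)
  | 0 => x
  | n + 1 => fire m (gameState m x s n) (s n)

/-- `s` encodes an infinite legal chip-firing game starting from `x`:
at each step the fired vertex is active. -/
def InfGame (m : V → V → ℕ) (x : V → ℤ) (s : ℕ → V) : Prop :=
  ∀ n, outdeg m (s n) ≤ gameState m x s n (s n)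

/-- A chip-distribution is terminating if no infinite legal game starts from it. -/
def Terminating (m : V → V → ℕ) (x : V → ℤ) : Prop :=
  ¬ ∃ s : ℕ → V, InfGame m x s

/-- The Laplacian of the digraph applied to `z`. -/
def lap (m : V → V → ℕ) (z : V → ℤ) : V → ℤ :=
  fun u => (∑ v, (m v u : ℤ) * z v) - outdeg m u * z u

/-- Linear equivalence: `x ∼ y` iff `x = y + L z` for some integer vector `z`. -/
def LinEquiv (m : V → V → ℕ) (x y : V → ℤ) : Prop :=
  ∃ z : V → ℤ, x = y + lap m z

/-- A divisor is equi-effective if it is linearly equivalent to an effective divisor. -/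
def EquiEffective (m : V → V → ℕ) (f : V → ℤ) : Prop :=
  ∃ g : V → ℤ, 0 ≤ g ∧ LinEquiv m f g

/-- The rank of a divisor `f`:
`min {deg g - 1 : g ≥ 0 and f - g is not equi-effective}`. -/
noncomputable def divRank (m : V → V → ℕ) (f : V → ℤ) : ℤ :=
  sInf {d : ℤ | ∃ g : V → ℤ, 0 ≤ g ∧ degSum g - 1 = d ∧ ¬ EquiEffective m (f - g)}


namespace RRaux

variable {V : Type} [Fintype V] [DecidableEq V]

set_option linter.unusedSectionVars false

lemma lap_apply (m : V → V → ℕ) (hsym : ∀ u v, m u v = m v u) (z : V → ℤ) (u : V) :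
    lap m z u = ∑ v, (m v u : ℤ) * (z v - z u) := by
  have h : outdeg m u = ∑ v, (m v u : ℤ) := by
    rw [outdeg]; exact Finset.sum_congr rfl fun v _ => by rw [hsym]
  simp only [lap, mul_sub, Finset.sum_sub_distrib, h, Finset.sum_mul]

lemma lap_zero (m : V → V → ℕ) : lap m 0 = 0 := by
  funext u; simp [lap]

lemma lap_add (m : V → V → ℕ) (y z : V → ℤ) : lap m (y + z) = lap m y + lap m z := by
  funext u
  simp only [lap, Pi.add_apply, mul_add, Finset.sum_add_distrib]
  ring

lemma lap_neg (m : V → V → ℕ) (z : V → ℤ) : lap m (-z) = -lap m z := by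
  funext u
  simp only [lap, Pi.neg_apply, mul_neg, Finset.sum_neg_distrib, Pi.neg_apply]
  ring

lemma linEquiv_refl (m : V → V → ℕ) (f : V → ℤ) : LinEquiv m f f :=
  ⟨0, by simp [lap_zero]⟩

lemma linEquiv_symm {m : V → V → ℕ} {f g : V → ℤ} (h : LinEquiv m f g) : LinEquiv m g f := by
  obtain ⟨z, hz⟩ := h
  exact ⟨-z, by rw [lap_neg, hz]; abel⟩

lemma linEquiv_trans {m : V → V → ℕ} {f g h : V → ℤ} (h1 : LinEquiv m f g)
    (h2 : LinEquiv m g h) : LinEquiv m f h := by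
  obtain ⟨z, hz⟩ := h1; obtain ⟨w, hw⟩ := h2
  exact ⟨z + w, by rw [lap_add, hz, hw]; abel⟩

lemma linEquiv_sub_right {m : V → V → ℕ} {f f' : V → ℤ} (g : V → ℤ)
    (h : LinEquiv m f f') : LinEquiv m (f - g) (f' - g) := by
  obtain ⟨z, hz⟩ := h
  exact ⟨z, by rw [hz]; abel⟩

lemma linEquiv_sub_left {m : V → V → ℕ} {f f' : V → ℤ} (g : V → ℤ)
    (h : LinEquiv m f f') : LinEquiv m (g - f) (g - f') := by
  obtain ⟨z, hz⟩ := h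
  exact ⟨-z, by rw [lap_neg, hz]; abel⟩

lemma equi_of_nonneg {m : V → V → ℕ} {f : V → ℤ} (h : 0 ≤ f) : EquiEffective m f :=
  ⟨f, h, linEquiv_refl m f⟩

lemma equi_congr {m : V → V → ℕ} {f f' : V → ℤ} (h : LinEquiv m f f')
    (h' : EquiEffective m f') : EquiEffective m f := by
  obtain ⟨g, hg, hfg⟩ := h'
  exact ⟨g, hg, linEquiv_trans h hfg⟩

lemma equi_add {m : V → V → ℕ} {f g : V → ℤ} (hf : EquiEffective m f)
    (hg : EquiEffective m g) : EquiEffective m (f + g) := by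
  obtain ⟨a, ha, z, hz⟩ := hf; obtain ⟨b, hb, w, hw⟩ := hg
  refine ⟨a + b, add_nonneg ha hb, z + w, ?_⟩
  rw [lap_add, hz, hw]; abel

lemma degSum_lap (m : V → V → ℕ) (z : V → ℤ) : degSum (lap m z) = 0 := by
  have h : ∑ u, ∑ v, (m v u : ℤ) * z v = ∑ u, outdeg m u * z u := by
    rw [Finset.sum_comm]
    refine Finset.sum_congr rfl fun v _ => ?_
    rw [outdeg, Finset.sum_mul]
  simp only [degSum, lap, Finset.sum_sub_distrib, h, sub_self]

lemma degSum_linEquiv {m : V → V → ℕ} {f f' : V → ℤ} (h : LinEquiv m f f') :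
    degSum f = degSum f' := by
  obtain ⟨z, hz⟩ := h
  rw [hz]
  simp only [degSum, Pi.add_apply, Finset.sum_add_distrib]
  have := degSum_lap m z
  simp only [degSum] at this
  omega

lemma degSum_nonneg_of_equi {m : V → V → ℕ} {f : V → ℤ} (h : EquiEffective m f) :
    0 ≤ degSum f := by
  obtain ⟨g, hg, hfg⟩ := h
  rw [degSum_linEquiv hfg]
  exact Finset.sum_nonneg fun v _ => hg v


/-- The divisor attached to the acyclic orientation induced by an injective
labelling `t`. -/
def Nu (m : V → V → ℕ) (t : V → ℤ) : V → ℤ :=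
  fun v => (∑ u, if t u < t v then (m u v : ℤ) else 0) - 1

/-- Sum of positive parts. -/
def degPlus (x : V → ℤ) : ℤ := ∑ v, max (x v) 0

lemma degPlus_nonneg (x : V → ℤ) : 0 ≤ degPlus x :=
  Finset.sum_nonneg fun v _ => le_max_right _ _

lemma degPlus_neg (x : V → ℤ) : degPlus (fun v => - x v) = degPlus x - degSum x := by
  simp only [degPlus, degSum, ← Finset.sum_sub_distrib]
  refine Finset.sum_congr rfl fun v _ => ?_
  omega

lemma degSum_nu (m : V → V → ℕ) (hsym : ∀ u v, m u v = m v u) (hloop : Loopless m)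
    {t : V → ℤ} (ht : Function.Injective t) (mG : ℕ)
    (hmG : 2 * mG = ∑ u, ∑ v, m u v) :
    degSum (Nu m t) = (mG : ℤ) - Fintype.card V := by
  have key : (∑ v, ∑ u, if t u < t v then (m u v : ℤ) else 0) = mG := by
    have h2 : (∑ v, ∑ u, if t u < t v then (m u v : ℤ) else 0)
        + (∑ v, ∑ u, if t v < t u then (m u v : ℤ) else 0) = 2 * mG := by
      rw [← Finset.sum_add_distrib]
      have : ∀ v ∈ Finset.univ, (∑ u, if t u < t v then (m u v : ℤ) else 0)
          + (∑ u, if t v < t u then (m u v : ℤ) else 0) = ∑ u, (m u v : ℤ) := by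
        intro v _
        rw [← Finset.sum_add_distrib]
        refine Finset.sum_congr rfl fun u _ => ?_
        rcases lt_trichotomy (t u) (t v) with h | h | h
        · simp [h, not_lt_of_gt h]
        · have : u = v := ht h
          subst this
          simp [hloop u]
        · simp [h, not_lt_of_gt h]
      rw [Finset.sum_congr rfl this, Finset.sum_comm]
      have h : ((∑ u : V, ∑ v : V, m u v : ℕ) : ℤ) = 2 * mG := by exact_mod_cast hmG.symm
      push_cast at h
      linarith
    have heq : (∑ v, ∑ u, if t v < t u then (m u v : ℤ) else 0)
        = ∑ v, ∑ u, if t u < t v then (m u v : ℤ) else 0 := by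
      rw [Finset.sum_comm]
      refine Finset.sum_congr rfl fun v _ => Finset.sum_congr rfl fun u _ => ?_
      rw [hsym]
    rw [heq] at h2
    omega
  simp only [degSum, Nu, Finset.sum_sub_distrib, key, Finset.sum_const, Finset.card_univ,
    nsmul_eq_mul, mul_one]

lemma nu_reverse (m : V → V → ℕ) (hsym : ∀ u v, m u v = m v u) (hloop : Loopless m)
    {t : V → ℤ} (ht : Function.Injective t) (v : V) :
    Nu m (fun u => - t u) v = (outdeg m v - 2) - Nu m t v := by
  have h1 : outdeg m v = ∑ u, (m u v : ℤ) := by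
    rw [outdeg]; exact Finset.sum_congr rfl fun u _ => by rw [hsym]
  simp only [Nu, h1, neg_lt_neg_iff]
  have : (∑ u, if t v < t u then (m u v : ℤ) else 0)
      = ∑ u, ((m u v : ℤ) - if t u < t v then (m u v : ℤ) else 0) := by
    refine Finset.sum_congr rfl fun u _ => ?_
    rcases lt_trichotomy (t u) (t v) with h | h | h
    · simp [h, not_lt_of_gt h]
    · have : u = v := ht h
      subst this
      simp [hloop u]
    · simp [h, not_lt_of_gt h]
  rw [this, Finset.sum_sub_distrib]
  ring

lemma nu_not_equi (m : V → V → ℕ) (hsym : ∀ u v, m u v = m v u)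
    {t : V → ℤ} (ht : Function.Injective t) [Nonempty V] :
    ¬ EquiEffective m (Nu m t) := by
  rintro ⟨E, hE, z, hz⟩
  obtain ⟨v₀, -, hv₀⟩ := Finset.exists_min_image Finset.univ z ⟨Classical.arbitrary V, Finset.mem_univ _⟩
  have hA : (Finset.univ.filter fun v => z v = z v₀).Nonempty :=
    ⟨v₀, by simp⟩
  obtain ⟨v, hvA, hv⟩ := Finset.exists_min_image _ t hA
  simp only [Finset.mem_filter] at hvA
  have hzv : ∀ u, z v ≤ z u := fun u => hvA.2 ▸ hv₀ u (Finset.mem_univ u)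
  have hlt : ∀ u, t u < t v → z v + 1 ≤ z u := by
    intro u htu
    rcases eq_or_lt_of_le (hzv u) with h | h
    · exfalso
      have : u ∈ Finset.univ.filter fun x => z x = z v₀ := by
        simp [← h, hvA.2]
      exact absurd (hv u this) (not_le_of_gt htu)
    · omega
  have hlap : Nu m t v + 1 ≤ lap m z v := by
    rw [lap_apply m hsym]
    have : (∑ u, if t u < t v then (m u v : ℤ) else 0) ≤ ∑ u, (m u v : ℤ) * (z u - z v) := by
      refine Finset.sum_le_sum fun u _ => ?_
      by_cases h : t u < t v
      · simp only [h, if_true]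
        have h1 : (1 : ℤ) ≤ z u - z v := by have := hlt u h; omega
        nlinarith [Int.natCast_nonneg (m u v)]
      · simp only [h, if_false]
        have h1 : (0 : ℤ) ≤ z u - z v := by have := hzv u; omega
        positivity
    simp only [Nu]
    omega
  have := congrFun hz v
  simp only [Pi.add_apply] at this
  have hEv := hE v
  simp only [Pi.zero_apply] at hEv
  omega

lemma lap_single (m : V → V → ℕ) (b u : V) :
    lap m (fun x => if x = b then (1 : ℤ) else 0) u
      = (m b u : ℤ) - (if u = b then outdeg m b else 0) := by
  simp only [lap, mul_ite, mul_one, mul_zero]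
  rw [Finset.sum_ite_eq' Finset.univ b fun v => (m v u : ℤ)]
  simp only [Finset.mem_univ, if_true]
  by_cases h : u = b <;> simp [h]

lemma lap_comb (m : V → V → ℕ) (a : ℤ) (y w : V → ℤ) (u : V) :
    lap m (fun x => a * y x + w x) u = a * lap m y u + lap m w u := by
  simp only [lap]
  have h : (∑ v, (m v u : ℤ) * (a * y v + w v))
      = a * (∑ v, (m v u : ℤ) * y v) + ∑ v, (m v u : ℤ) * w v := by
    rw [Finset.mul_sum, ← Finset.sum_add_distrib]
    exact Finset.sum_congr rfl fun v _ => by ring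
  rw [h]; ring

lemma lap_finsum (m : V → V → ℕ) (c : V → ℤ) (zc : V → V → ℤ) (u : V) :
    lap m (fun x => ∑ v, c v * zc v x) u = ∑ v, c v * lap m (zc v) u := by
  simp only [lap, mul_sub]
  rw [Finset.sum_sub_distrib]
  congr 1
  · calc ∑ w, (m w u : ℤ) * ∑ v, c v * zc v w
        = ∑ w, ∑ v, (m w u : ℤ) * (c v * zc v w) :=
          Finset.sum_congr rfl fun w _ => Finset.mul_sum _ _ _
      _ = ∑ v, ∑ w, (m w u : ℤ) * (c v * zc v w) := Finset.sum_comm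
      _ = ∑ v, c v * ∑ w, (m w u : ℤ) * zc v w := by
          refine Finset.sum_congr rfl fun v _ => ?_
          rw [Finset.mul_sum]
          exact Finset.sum_congr rfl fun w _ => by ring
  · rw [Finset.mul_sum]
    exact Finset.sum_congr rfl fun v _ => by ring

lemma exists_send (m : V → V → ℕ) (hconn : StronglyConnected m) (q v : V) :
    v = q ∨ ∃ z : V → ℤ, (∀ u, u ≠ q → 0 ≤ lap m z u) ∧ 1 ≤ lap m z v := by
  have h := hconn q v
  induction h with
  | refl => exact Or.inl rfl
  | @tail b c hqb hbc ih =>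
    by_cases hcq : c = q
    · exact Or.inl hcq
    refine Or.inr ?_
    rcases ih with hb | ⟨z₀, hz₀, hz₀b⟩
    · subst hb
      refine ⟨fun x => if x = b then 1 else 0, fun u hu => ?_, ?_⟩
      · rw [lap_single]
        simp only [hu, if_false]
        have := Int.natCast_nonneg (m b u)
        omega
      · rw [lap_single]
        simp only [hcq, if_false]
        have : 0 < m b c := hbc
        omega
    · by_cases hcb : c = b
      · exact ⟨z₀, hz₀, hcb ▸ hz₀b⟩
      refine ⟨fun x => outdeg m b * z₀ x + (if x = b then 1 else 0), fun u hu => ?_, ?_⟩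
      · rw [lap_comb, lap_single]
        have hd : 0 ≤ outdeg m b := Finset.sum_nonneg fun x _ => Int.natCast_nonneg _
        by_cases hub : u = b
        · subst hub
          simp only [if_true]
          have h1 : 1 ≤ lap m z₀ u := hz₀b
          nlinarith
        · simp only [hub, if_false]
          have h1 : 0 ≤ lap m z₀ u := hz₀ u hu
          have h2 : (0 : ℤ) ≤ m b u := Int.natCast_nonneg _
          nlinarith
      · rw [lap_comb, lap_single]
        simp only [hcb, if_false]
        have hd : 0 ≤ outdeg m b := Finset.sum_nonneg fun x _ => Int.natCast_nonneg _
        have h1 : 0 ≤ lap m z₀ c := hz₀ c hcq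
        have h2 : 0 < m b c := hbc
        have h3 : (1 : ℤ) ≤ m b c := by omega
        nlinarith

lemma exists_nonneg_off (m : V → V → ℕ) (hconn : StronglyConnected m)
    (f : V → ℤ) (q : V) :
    ∃ f', LinEquiv m f f' ∧ ∀ v, v ≠ q → 0 ≤ f' v := by
  have hz : ∀ v : V, ∃ z : V → ℤ,
      (∀ u, u ≠ q → 0 ≤ lap m z u) ∧ (v ≠ q → 1 ≤ lap m z v) := by
    intro v
    rcases exists_send m hconn q v with h | ⟨z, h1, h2⟩
    · exact ⟨0, by simp [lap_zero], fun hv => absurd h hv⟩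
    · exact ⟨z, h1, fun _ => h2⟩
  choose zc hzc1 hzc2 using hz
  set N : V → ℤ := fun v => max (-(f v)) 0 with hN
  set Z : V → ℤ := fun x => ∑ v, N v * zc v x with hZ
  refine ⟨f + lap m Z, ⟨-Z, by rw [lap_neg]; abel⟩, fun x hx => ?_⟩
  have hlap : lap m Z x = ∑ v, N v * lap m (zc v) x := lap_finsum m N zc x
  have hterm : ∀ v ∈ Finset.univ, 0 ≤ N v * lap m (zc v) x := by
    intro v _
    exact mul_nonneg (le_max_right _ _) (hzc1 v x hx)
  have hsingle : N x ≤ ∑ v, N v * lap m (zc v) x := by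
    have h1 : N x * 1 ≤ N x * lap m (zc x) x :=
      mul_le_mul_of_nonneg_left (hzc2 x hx) (le_max_right _ _)
    calc N x = N x * 1 := (mul_one _).symm
      _ ≤ N x * lap m (zc x) x := h1
      _ ≤ ∑ v, N v * lap m (zc v) x := Finset.single_le_sum hterm (Finset.mem_univ x)
  have : -(f x) ≤ N x := le_max_left _ _
  simp only [Pi.add_apply]
  omega

/-- `v` is reachable from `q` in at most `k` steps. -/
def RN (m : V → V → ℕ) (q : V) : ℕ → V → Prop
  | 0 => fun v => v = q
  | (k+1) => fun v => RN m q k v ∨ ∃ u, RN m q k u ∧ 0 < m u v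

lemma rn_exists (m : V → V → ℕ) (hconn : StronglyConnected m) (q v : V) :
    ∃ k, RN m q k v := by
  have h := hconn q v
  induction h with
  | refl => exact ⟨0, rfl⟩
  | @tail b c hqb hbc ih =>
    obtain ⟨k, hk⟩ := ih
    exact ⟨k + 1, Or.inr ⟨b, hk, hbc⟩⟩

noncomputable def distQ (m : V → V → ℕ) (q v : V) : ℕ := sInf {k | RN m q k v}

lemma distQ_spec (m : V → V → ℕ) (hconn : StronglyConnected m) (q v : V) :
    RN m q (distQ m q v) v :=
  Nat.sInf_mem (rn_exists m hconn q v)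

lemma distQ_q (m : V → V → ℕ) (q : V) : distQ m q q = 0 :=
  Nat.le_antisymm (Nat.sInf_le (show RN m q 0 q from rfl)) (Nat.zero_le _)

lemma distQ_edge (m : V → V → ℕ) (hconn : StronglyConnected m) {q u v : V}
    (h : 0 < m u v) : distQ m q v ≤ distQ m q u + 1 :=
  Nat.sInf_le (Or.inr ⟨u, distQ_spec m hconn q u, h⟩)

lemma distQ_eq_zero (m : V → V → ℕ) (hconn : StronglyConnected m) {q v : V}
    (h : distQ m q v = 0) : v = q := by
  have := distQ_spec m hconn q v
  rw [h] at this
  exact this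

lemma distQ_step (m : V → V → ℕ) (hconn : StronglyConnected m) {q v : V}
    (h : 0 < distQ m q v) : ∃ u, 0 < m u v ∧ distQ m q u + 1 = distQ m q v := by
  set k := distQ m q v - 1 with hkdef
  have hk1 : distQ m q v = k + 1 := by omega
  have hv : RN m q (k + 1) v := by rw [← hk1]; exact distQ_spec m hconn q v
  have hnk : ¬ RN m q k v := fun hc => by
    have : distQ m q v ≤ k := Nat.sInf_le hc
    omega
  rcases hv with h' | ⟨u, hu, he⟩
  · exact absurd h' hnk
  · have h1 : distQ m q u ≤ k := Nat.sInf_le hu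
    have h2 : distQ m q v ≤ distQ m q u + 1 := distQ_edge m hconn he
    exact ⟨u, he, by omega⟩

lemma exists_distQ_eq (m : V → V → ℕ) (hconn : StronglyConnected m) (q : V) :
    ∀ n x, distQ m q x = n → ∀ j, j ≤ n → ∃ v, distQ m q v = j := by
  intro n
  induction n with
  | zero =>
    intro x hx j hj
    exact ⟨x, by omega⟩
  | succ k ih =>
    intro x hx j hj
    rcases Nat.eq_or_lt_of_le hj with h | h
    · exact ⟨x, by omega⟩
    · obtain ⟨u, -, hu⟩ := distQ_step m hconn (q := q) (v := x) (by omega)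
      exact ih u (by omega) j (by omega)

lemma distQ_lt_card (m : V → V → ℕ) (hconn : StronglyConnected m) (q v : V) :
    distQ m q v < Fintype.card V := by
  classical
  have hpos : 0 < Fintype.card V := Fintype.card_pos_iff.mpr ⟨q⟩
  have claim : ∀ k : ℕ, (∀ x, distQ m q x ≤ k) ∨
      k + 1 ≤ (Finset.univ.filter fun x => distQ m q x ≤ k).card := by
    intro k
    induction k with
    | zero =>
      right
      exact Finset.card_pos.mpr ⟨q, by simp [distQ_q]⟩
    | succ k ih =>
      rcases ih with h | h
      · exact Or.inl fun x => (h x).trans (Nat.le_succ k)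
      · by_cases hall : ∀ x, distQ m q x ≤ k + 1
        · exact Or.inl hall
        · right
          push_neg at hall
          obtain ⟨x, hx⟩ := hall
          obtain ⟨v', hv'⟩ := exists_distQ_eq m hconn q (distQ m q x) x rfl (k+1) (by omega)
          have hsub : (Finset.univ.filter fun y => distQ m q y ≤ k)
              ⊆ Finset.univ.filter fun y => distQ m q y ≤ k + 1 := by
            intro y hy
            simp only [Finset.mem_filter] at hy ⊢
            exact ⟨hy.1, hy.2.trans (Nat.le_succ k)⟩
          have hss : (Finset.univ.filter fun y => distQ m q y ≤ k)
              ⊂ Finset.univ.filter fun y => distQ m q y ≤ k + 1 := by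
            refine ⟨hsub, fun hc => ?_⟩
            have : v' ∈ Finset.univ.filter fun y => distQ m q y ≤ k + 1 := by
              simp [hv']
            have := hc this
            simp only [Finset.mem_filter] at this
            omega
          have := Finset.card_lt_card hss
          omega
  rcases claim (Fintype.card V - 1) with h | h
  · have := h v; omega
  · have hle : (Finset.univ.filter fun x => distQ m q x ≤ Fintype.card V - 1).card
        ≤ Fintype.card V := by
      rw [← Finset.card_univ]
      exact Finset.card_le_card (Finset.filter_subset _ _)
    have heq : (Finset.univ.filter fun x => distQ m q x ≤ Fintype.card V - 1)
        = Finset.univ := Finset.eq_univ_of_card _ (by omega)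
    have : v ∈ Finset.univ.filter fun x => distQ m q x ≤ Fintype.card V - 1 := by
      rw [heq]; exact Finset.mem_univ v
    simp only [Finset.mem_filter] at this
    omega

/-- Weight scale: max degree. -/
def Dm (m : V → V → ℕ) : ℕ := Finset.univ.sup fun x => ∑ u, m x u

lemma le_Dm (m : V → V → ℕ) (v : V) : (∑ u, m v u) ≤ Dm m :=
  Finset.le_sup (f := fun x => ∑ u, m x u) (Finset.mem_univ v)

/-- Level values for the weight function. -/
def cfun (m : V → V → ℕ) (k : ℕ) : ℕ :=
  ∑ j ∈ Finset.range k, (Dm m + 1) ^ (Fintype.card V - 1 - j)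

lemma cfun_mono (m : V → V → ℕ) : Monotone (cfun (V := V) m) := by
  intro a b hab
  exact Finset.sum_le_sum_of_subset (Finset.range_subset_range.mpr hab)

lemma cfun_succ (m : V → V → ℕ) (k : ℕ) :
    cfun (V := V) m (k + 1) = cfun m k + (Dm m + 1) ^ (Fintype.card V - 1 - k) :=
  Finset.sum_range_succ _ _

/-- A strictly superharmonic (off `q`) nonnegative weight vanishing at `q`. -/
noncomputable def wgt (m : V → V → ℕ) (q : V) (v : V) : ℕ := cfun m (distQ m q v)

lemma wgt_q (m : V → V → ℕ) (q : V) : wgt m q q = 0 := by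
  rw [wgt, distQ_q]
  rfl

lemma wgt_superharm (m : V → V → ℕ) (hsym : ∀ u v, m u v = m v u)
    (hconn : StronglyConnected m) (q v : V) (hv : v ≠ q) :
    (∑ u, (m v u : ℤ) * ((wgt m q u : ℤ) - (wgt m q v : ℤ))) ≤ -1 := by
  classical
  set n := Fintype.card V with hn
  set D := Dm m with hD
  set k := distQ m q v with hkdef
  have hk : 0 < k := by
    rcases Nat.eq_zero_or_pos k with h | h
    · exact absurd (distQ_eq_zero m hconn h) hv
    · exact h
  have hkn : k < n := distQ_lt_card m hconn q v
  obtain ⟨u₀, hu₀e, hu₀d⟩ := distQ_step m hconn (q := q) hk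
  have hvu₀ : 0 < m v u₀ := by rw [hsym]; exact hu₀e
  have hgap : cfun m k = cfun (V := V) m (k - 1) + (D + 1) ^ (n - k) := by
    have h1 : k = (k - 1) + 1 := by omega
    rw [h1, cfun_succ]
    congr 2
    omega
  have hwu₀ : (wgt m q u₀ : ℤ) - (wgt m q v : ℤ) = -((D + 1 : ℕ) ^ (n - k) : ℤ) := by
    have : wgt m q u₀ = cfun m (k - 1) := by rw [wgt]; congr 1; omega
    rw [this, wgt, ← hkdef, hgap]
    push_cast
    ring
  have hbound : ∀ u, u ≠ u₀ →
      (m v u : ℤ) * ((wgt m q u : ℤ) - (wgt m q v : ℤ))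
        ≤ (m v u : ℤ) * ((D + 1 : ℕ) ^ (n - 1 - k) : ℤ) := by
    intro u hu
    rcases Nat.eq_zero_or_pos (m v u) with h0 | h0
    · simp [h0]
    · refine mul_le_mul_of_nonneg_left ?_ (Int.natCast_nonneg _)
      have hdu : distQ m q u ≤ k + 1 := by
        have : 0 < m v u := h0
        exact distQ_edge m hconn this
      have : wgt m q u ≤ cfun (V := V) m (k + 1) := cfun_mono m hdu
      have h2 : cfun (V := V) m (k + 1) = cfun m k + (D + 1) ^ (n - 1 - k) := cfun_succ m k
      have h3 : (wgt m q u : ℤ) ≤ (cfun (V := V) m k : ℤ) + ((D + 1 : ℕ) ^ (n - 1 - k) : ℤ) := by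
        rw [← Nat.cast_pow, ← Nat.cast_add, ← h2]
        exact_mod_cast this
      have h4 : (wgt m q v : ℤ) = (cfun (V := V) m k : ℤ) := by rw [wgt, ← hkdef]
      omega
  rw [← Finset.add_sum_erase _ _ (Finset.mem_univ u₀)]
  have hterm1 : (m v u₀ : ℤ) * ((wgt m q u₀ : ℤ) - (wgt m q v : ℤ))
      ≤ -((D + 1 : ℕ) ^ (n - k) : ℤ) := by
    rw [hwu₀]
    have h1 : (1 : ℤ) ≤ (m v u₀ : ℤ) := by exact_mod_cast hvu₀
    have h2 : (0 : ℤ) < ((D + 1 : ℕ) ^ (n - k) : ℤ) := by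
      have : 1 ≤ (D + 1) ^ (n - k) := Nat.one_le_pow _ _ (by omega)
      exact_mod_cast this
    nlinarith
  have hterm2 : (∑ u ∈ Finset.univ.erase u₀, (m v u : ℤ) * ((wgt m q u : ℤ) - (wgt m q v : ℤ)))
      ≤ (D - 1 : ℤ) * ((D + 1 : ℕ) ^ (n - 1 - k) : ℤ) := by
    have hsum : (∑ u ∈ Finset.univ.erase u₀, (m v u : ℤ) * ((wgt m q u : ℤ) - (wgt m q v : ℤ)))
        ≤ ∑ u ∈ Finset.univ.erase u₀, (m v u : ℤ) * ((D + 1 : ℕ) ^ (n - 1 - k) : ℤ) :=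
      Finset.sum_le_sum fun u hu => hbound u (Finset.ne_of_mem_erase hu)
    have hsum2 : (∑ u ∈ Finset.univ.erase u₀, (m v u : ℤ))
        ≤ (D : ℤ) - 1 := by
      have hfull : (∑ u, m v u) = m v u₀ + ∑ u ∈ Finset.univ.erase u₀, m v u :=
        (Finset.add_sum_erase _ _ (Finset.mem_univ u₀)).symm
      have hD1 : (∑ u, m v u) ≤ D := le_Dm m v
      have : (∑ u ∈ Finset.univ.erase u₀, m v u) ≤ D - 1 := by omega
      calc (∑ u ∈ Finset.univ.erase u₀, (m v u : ℤ))
          = ((∑ u ∈ Finset.univ.erase u₀, m v u : ℕ) : ℤ) := by push_cast; rfl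
        _ ≤ ((D - 1 : ℕ) : ℤ) := by exact_mod_cast this
        _ ≤ (D : ℤ) - 1 := by
            have : 1 ≤ D := by omega
            push_cast [Nat.cast_sub this]
            omega
    calc (∑ u ∈ Finset.univ.erase u₀, (m v u : ℤ) * ((wgt m q u : ℤ) - (wgt m q v : ℤ)))
        ≤ ∑ u ∈ Finset.univ.erase u₀, (m v u : ℤ) * ((D + 1 : ℕ) ^ (n - 1 - k) : ℤ) := hsum
      _ = (∑ u ∈ Finset.univ.erase u₀, (m v u : ℤ)) * ((D + 1 : ℕ) ^ (n - 1 - k) : ℤ) :=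
          (Finset.sum_mul _ _ _).symm
      _ ≤ (D - 1 : ℤ) * ((D + 1 : ℕ) ^ (n - 1 - k) : ℤ) := by
          have h2 : (0 : ℤ) ≤ ((D + 1 : ℕ) ^ (n - 1 - k) : ℤ) := by positivity
          exact mul_le_mul_of_nonneg_right hsum2 h2
  have hpow : ((D + 1 : ℕ) ^ (n - k) : ℤ)
      = ((D + 1 : ℕ) : ℤ) * ((D + 1 : ℕ) ^ (n - 1 - k) : ℤ) := by
    have h1 : n - k = (n - 1 - k) + 1 := by omega
    rw [h1, pow_succ]
    push_cast
    ring
  have hP : (1 : ℤ) ≤ ((D + 1 : ℕ) ^ (n - 1 - k) : ℤ) := by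
    have : 1 ≤ (D + 1) ^ (n - 1 - k) := Nat.one_le_pow _ _ (by omega)
    exact_mod_cast this
  have hDc : ((D + 1 : ℕ) : ℤ) = (D : ℤ) + 1 := by push_cast; rfl
  nlinarith [hterm1, hterm2]

lemma lap_indicator (m : V → V → ℕ) (S : Finset V) (u : V) :
    lap m (fun x => if x ∈ S then (1 : ℤ) else 0) u
      = (∑ x ∈ S, (m x u : ℤ)) - (if u ∈ S then outdeg m u else 0) := by
  simp only [lap, mul_ite, mul_one, mul_zero]
  rw [Finset.sum_ite_mem, Finset.univ_inter]

lemma exists_good (m : V → V → ℕ) (hsym : ∀ u v, m u v = m v u)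
    (hconn : StronglyConnected m) [Nonempty V] (f : V → ℤ) (q : V)
    (hne : ¬ EquiEffective m f) :
    ∃ f₀, LinEquiv m f f₀ ∧ (∀ v, v ≠ q → 0 ≤ f₀ v) ∧ f₀ q ≤ -1 ∧
      ∀ B : Finset V, q ∈ B → B ≠ Finset.univ →
        ∃ v, v ∉ B ∧ f₀ v < ∑ u ∈ B, (m u v : ℤ) := by
  classical
  set w : V → ℤ := fun v => (wgt m q v : ℤ) with hwdef
  have hw0 : w q = 0 := by simp [hwdef, wgt_q]
  have hwpos : ∀ v, 0 ≤ w v := fun v => Int.natCast_nonneg _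
  set P : ℤ → Prop := fun p => ∃ f', (LinEquiv m f f' ∧ ∀ v, v ≠ q → 0 ≤ f' v)
      ∧ ∑ v, f' v * w v = p with hPdef
  have hbdd : ∀ p, P p → 0 ≤ p := by
    rintro p ⟨f', ⟨-, hpos⟩, rfl⟩
    refine Finset.sum_nonneg fun v _ => ?_
    by_cases hv : v = q
    · subst hv; rw [hw0]; simp
    · exact mul_nonneg (hpos v hv) (hwpos v)
  have hinh : ∃ p, P p := by
    obtain ⟨f', h1, h2⟩ := exists_nonneg_off m hconn f q
    exact ⟨_, f', ⟨h1, h2⟩, rfl⟩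
  obtain ⟨p₀, ⟨f₀, ⟨hlin, hpos⟩, hp₀⟩, hleast⟩ := Int.exists_least_of_bdd ⟨0, hbdd⟩ hinh
  have hq : f₀ q ≤ -1 := by
    by_contra hc
    push_neg at hc
    have h0 : (0 : V → ℤ) ≤ f₀ := by
      intro v
      simp only [Pi.zero_apply]
      by_cases hv : v = q
      · subst hv; omega
      · exact hpos v hv
    exact hne (equi_congr hlin (equi_of_nonneg h0))
  refine ⟨f₀, hlin, hpos, hq, ?_⟩
  intro B hqB hBne
  by_contra hcon
  push_neg at hcon
  set S : Finset V := Finset.univ \ B with hSdef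
  have hSne : S.Nonempty := by
    rw [hSdef]
    have hns : ¬ (Finset.univ ⊆ B) := fun h => hBne (Finset.univ_subset_iff.mp h)
    obtain ⟨x, -, hx⟩ := Finset.not_subset.mp hns
    exact ⟨x, Finset.mem_sdiff.mpr ⟨Finset.mem_univ x, hx⟩⟩
  have hqS : q ∉ S := by simp [hSdef, hqB]
  set zS : V → ℤ := fun x => if x ∈ S then 1 else 0 with hzSdef
  set f₁ : V → ℤ := f₀ + lap m zS with hf₁def
  have hlin1 : LinEquiv m f f₁ :=
    linEquiv_trans hlin ⟨-zS, by rw [lap_neg, hf₁def]; abel⟩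
  have hSB : ∀ v, v ∈ S ↔ v ∉ B := by
    intro v; simp [hSdef]
  have hpos1 : ∀ v, v ≠ q → 0 ≤ f₁ v := by
    intro v hv
    have hlapv := lap_indicator m S v
    rw [← hzSdef] at hlapv
    simp only [hf₁def, Pi.add_apply, hlapv]
    by_cases hvS : v ∈ S
    · simp only [hvS, if_true]
      have hsplit : (∑ x ∈ S, (m x v : ℤ)) + ∑ x ∈ B, (m x v : ℤ) = ∑ x, (m x v : ℤ) := by
        rw [hSdef]; exact Finset.sum_sdiff (Finset.subset_univ B)
      have hout : outdeg m v = ∑ x, (m x v : ℤ) := by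
        rw [outdeg]; exact Finset.sum_congr rfl fun x _ => by rw [hsym]
      have hc := hcon v ((hSB v).mp hvS)
      omega
    · simp only [hvS, if_false]
      have h1 : 0 ≤ ∑ x ∈ S, (m x v : ℤ) := Finset.sum_nonneg fun x _ => Int.natCast_nonneg _
      have h2 := hpos v hv
      omega
  have hE : (∑ v, lap m zS v * w v) ≤ -1 := by
    have step1 : (∑ v, lap m zS v * w v)
        = (∑ v, (∑ x ∈ S, (m x v : ℤ)) * w v)
          - ∑ v, (if v ∈ S then outdeg m v else 0) * w v := by
      rw [← Finset.sum_sub_distrib]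
      refine Finset.sum_congr rfl fun v _ => ?_
      have hlapv := lap_indicator m S v
      rw [← hzSdef] at hlapv
      rw [hlapv]; ring
    have step2 : (∑ v, (∑ x ∈ S, (m x v : ℤ)) * w v)
        = ∑ x ∈ S, ∑ v, (m x v : ℤ) * w v := by
      rw [Finset.sum_comm]
      exact Finset.sum_congr rfl fun v _ => Finset.sum_mul _ _ _
    have step3 : (∑ v, (if v ∈ S then outdeg m v else 0) * w v)
        = ∑ x ∈ S, outdeg m x * w x := by
      simp only [ite_mul, zero_mul]
      rw [Finset.sum_ite_mem, Finset.univ_inter]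
    have step4 : (∑ x ∈ S, ∑ v, (m x v : ℤ) * w v) - (∑ x ∈ S, outdeg m x * w x)
        = ∑ x ∈ S, ∑ v, (m x v : ℤ) * (w v - w x) := by
      rw [← Finset.sum_sub_distrib]
      refine Finset.sum_congr rfl fun x _ => ?_
      rw [outdeg, Finset.sum_mul, ← Finset.sum_sub_distrib]
      exact Finset.sum_congr rfl fun v _ => by ring
    rw [step1, step2, step3, step4]
    calc (∑ x ∈ S, ∑ v, (m x v : ℤ) * (w v - w x))
        ≤ ∑ x ∈ S, (-1 : ℤ) := by
          refine Finset.sum_le_sum fun x hx => ?_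
          have hxq : x ≠ q := fun hc => hqS (hc ▸ hx)
          exact wgt_superharm m hsym hconn q x hxq
      _ ≤ -1 := by
          have := hSne.card_pos
          simp only [Finset.sum_const, nsmul_eq_mul, mul_neg, mul_one]
          omega
  have hnewp : P (∑ v, f₁ v * w v) := ⟨f₁, ⟨hlin1, hpos1⟩, rfl⟩
  have hval : (∑ v, f₁ v * w v) = p₀ + ∑ v, lap m zS v * w v := by
    rw [← hp₀, ← Finset.sum_add_distrib]
    exact Finset.sum_congr rfl fun v _ => by simp only [hf₁def, Pi.add_apply]; ring
  have := hleast _ hnewp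
  omega

lemma exists_order (m : V → V → ℕ) [Nonempty V] (f₀ : V → ℤ) (q : V)
    (hq0 : f₀ q ≤ -1)
    (hburn : ∀ B : Finset V, q ∈ B → B ≠ Finset.univ →
      ∃ v, v ∉ B ∧ f₀ v < ∑ u ∈ B, (m u v : ℤ)) :
    ∃ t : V → ℤ, Function.Injective t ∧ ∀ v, f₀ v ≤ Nu m t v := by
  classical
  set n := Fintype.card V with hn
  have hn1 : 1 ≤ n := Fintype.card_pos
  have main : ∀ k, 1 ≤ k → k ≤ n → ∃ b : ℕ → V, b 0 = q ∧
      (∀ i j, i < k → j < k → b i = b j → i = j) ∧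
      (∀ i, 0 < i → i < k → f₀ (b i) < ∑ j ∈ Finset.range i, (m (b j) (b i) : ℤ)) := by
    intro k
    induction k with
    | zero => omega
    | succ k ih =>
      intro _ hkn
      rcases Nat.eq_zero_or_pos k with hk0 | hk1
      · subst hk0
        exact ⟨fun _ => q, rfl, fun i j hi hj _ => by omega, fun i hi hik => by omega⟩
      obtain ⟨b, hb0, hbinj, hbf⟩ := ih (by omega) (by omega)
      set B := (Finset.range k).image b with hB
      have hinjOn : ∀ x ∈ Finset.range k, ∀ y ∈ Finset.range k, b x = b y → x = y := by
        intro x hx y hy hxy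
        exact hbinj x y (Finset.mem_range.mp hx) (Finset.mem_range.mp hy) hxy
      have hcard : B.card = k := by
        rw [hB, Finset.card_image_of_injOn hinjOn, Finset.card_range]
      have hBne : B ≠ Finset.univ := by
        intro h
        rw [h, Finset.card_univ] at hcard
        omega
      have hqB : q ∈ B := by
        rw [hB]
        exact Finset.mem_image.mpr ⟨0, Finset.mem_range.mpr (by omega), hb0⟩
      obtain ⟨v, hvB, hvf⟩ := hburn B hqB hBne
      refine ⟨fun i => if i < k then b i else v, by simp [hk1, hb0], ?_, ?_⟩
      · intro i j hi hj hij
        by_cases h1 : i < k <;> by_cases h2 : j < k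
        · simp only [h1, h2, if_true] at hij
          exact hbinj i j h1 h2 hij
        · simp only [h1, h2, if_true, if_false] at hij
          exact absurd (Finset.mem_image.mpr ⟨i, Finset.mem_range.mpr h1, hij⟩) hvB
        · simp only [h1, h2, if_true, if_false] at hij
          exact absurd (Finset.mem_image.mpr ⟨j, Finset.mem_range.mpr h2, hij.symm⟩) hvB
        · omega
      · intro i hi hik
        by_cases h1 : i < k
        · have := hbf i hi h1
          simp only [h1, if_true]
          have hrw : ∀ j ∈ Finset.range i,
              (m ((fun i => if i < k then b i else v) j) (b i) : ℤ) = (m (b j) (b i) : ℤ) := by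
            intro j hj
            have : j < k := by have := Finset.mem_range.mp hj; omega
            simp [this]
          rw [Finset.sum_congr rfl hrw]
          exact this
        · have hik' : i = k := by omega
          rw [hik']
          simp only [lt_irrefl, if_false]
          have hrw : ∀ j ∈ Finset.range k,
              (m ((fun i => if i < k then b i else v) j) v : ℤ) = (m (b j) v : ℤ) := by
            intro j hj
            have : j < k := Finset.mem_range.mp hj
            simp [this]
          rw [Finset.sum_congr rfl hrw]
          have himg : ∑ u ∈ B, (m u v : ℤ) = ∑ j ∈ Finset.range k, (m (b j) v : ℤ) := by
            rw [hB]
            exact Finset.sum_image hinjOn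
          rw [← himg]
          exact hvf
  obtain ⟨b, hb0, hbinj, hbf⟩ := main n hn1 le_rfl
  have hinjOn : ∀ x ∈ Finset.range n, ∀ y ∈ Finset.range n, b x = b y → x = y := by
    intro x hx y hy hxy
    exact hbinj x y (Finset.mem_range.mp hx) (Finset.mem_range.mp hy) hxy
  have hsurj : ∀ v : V, ∃ i, i < n ∧ b i = v := by
    have himg : (Finset.range n).image b = Finset.univ := by
      refine Finset.eq_univ_of_card _ ?_
      rw [Finset.card_image_of_injOn hinjOn, Finset.card_range]
    intro v
    have : v ∈ (Finset.range n).image b := by rw [himg]; exact Finset.mem_univ v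
    obtain ⟨i, hi, hbi⟩ := Finset.mem_image.mp this
    exact ⟨i, Finset.mem_range.mp hi, hbi⟩
  set idx : V → ℕ := fun v => Nat.find (hsurj v) with hidxdef
  have hidx1 : ∀ v, idx v < n ∧ b (idx v) = v := fun v => Nat.find_spec (hsurj v)
  have hidx_le : ∀ j, j < n → idx (b j) ≤ j := fun j hj => Nat.find_min' _ ⟨hj, rfl⟩
  set t : V → ℤ := fun v => (idx v : ℤ) with htdef
  have htinj : Function.Injective t := by
    intro u v h
    have h' : (idx u : ℤ) = (idx v : ℤ) := h
    have h2 : idx u = idx v := by exact_mod_cast h'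
    rw [← (hidx1 u).2, ← (hidx1 v).2, h2]
  refine ⟨t, htinj, fun v => ?_⟩
  have hbi : b (idx v) = v := (hidx1 v).2
  have hin : idx v < n := (hidx1 v).1
  have hsumnn : (0 : ℤ) ≤ ∑ u, (if t u < t v then (m u v : ℤ) else 0) :=
    Finset.sum_nonneg fun u _ => by
      by_cases h : t u < t v <;> simp [h, Int.natCast_nonneg]
  rcases Nat.eq_zero_or_pos (idx v) with h0 | hpos
  · have hvq : v = q := by rw [← hbi, h0, hb0]
    simp only [Nu]
    rw [hvq] at hsumnn ⊢
    omega
  · have hlt := hbf (idx v) hpos hin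
    rw [hbi] at hlt
    have himg2 : ∑ u ∈ (Finset.range (idx v)).image b, (m u v : ℤ)
        = ∑ j ∈ Finset.range (idx v), (m (b j) v : ℤ) := by
      refine Finset.sum_image ?_
      intro x hx y hy hxy
      refine hinjOn x ?_ y ?_ hxy
      · exact Finset.mem_range.mpr (by have := Finset.mem_range.mp hx; omega)
      · exact Finset.mem_range.mpr (by have := Finset.mem_range.mp hy; omega)
    have hsub : (Finset.range (idx v)).image b ⊆ Finset.univ.filter fun u => t u < t v := by
      intro u hu
      obtain ⟨j, hj, hbj⟩ := Finset.mem_image.mp hu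
      have hjlt : j < idx v := Finset.mem_range.mp hj
      have h1 : idx u ≤ j := by
        rw [← hbj]
        exact hidx_le j (by omega)
      refine Finset.mem_filter.mpr ⟨Finset.mem_univ u, ?_⟩
      show (idx u : ℤ) < (idx v : ℤ)
      exact_mod_cast by omega
    have hle2 : ∑ u ∈ (Finset.range (idx v)).image b, (m u v : ℤ)
        ≤ ∑ u ∈ Finset.univ.filter (fun u => t u < t v), (m u v : ℤ) :=
      Finset.sum_le_sum_of_subset_of_nonneg hsub fun u _ _ => Int.natCast_nonneg _
    have hfil : ∑ u ∈ Finset.univ.filter (fun u => t u < t v), (m u v : ℤ)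
        = ∑ u, if t u < t v then (m u v : ℤ) else 0 := Finset.sum_filter _ _
    rw [himg2] at hle2
    rw [hfil] at hle2
    simp only [Nu]
    omega
  
lemma dichotomy_hard (m : V → V → ℕ) (hsym : ∀ u v, m u v = m v u)
    (hconn : StronglyConnected m) [Nonempty V] (f : V → ℤ)
    (hne : ¬ EquiEffective m f) :
    ∃ t : V → ℤ, Function.Injective t ∧ EquiEffective m (fun v => Nu m t v - f v) := by
  obtain ⟨f₀, hlin, hpos, hq, hburn⟩ := exists_good m hsym hconn f (Classical.arbitrary V) hne
  obtain ⟨t, htinj, hle⟩ := exists_order m f₀ (Classical.arbitrary V) hq hburn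
  refine ⟨t, htinj, ?_⟩
  obtain ⟨z, hz⟩ := hlin
  have h1 : LinEquiv m (fun v => Nu m t v - f v) (fun v => Nu m t v - f₀ v) := by
    refine ⟨-z, ?_⟩
    funext v
    have := congrFun hz v
    simp only [Pi.add_apply] at this
    simp only [Pi.add_apply, lap_neg, Pi.neg_apply]
    omega
  refine equi_congr h1 (equi_of_nonneg fun v => ?_)
  simp only [Pi.zero_apply]
  have := hle v
  omega

/-- The set of values `deg⁺(f' - ν_t)` over orders `t` and `f' ∼ f`. -/
def Aset (m : V → V → ℕ) (f : V → ℤ) : Set ℤ :=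
  {a | ∃ t : V → ℤ, Function.Injective t ∧
    ∃ f', LinEquiv m f f' ∧ a = degPlus (fun v => f' v - Nu m t v)}

lemma not_both (m : V → V → ℕ) (hsym : ∀ u v, m u v = m v u) [Nonempty V]
    {t : V → ℤ} (ht : Function.Injective t) {x : V → ℤ}
    (h1 : EquiEffective m x) (h2 : EquiEffective m (fun v => Nu m t v - x v)) : False := by
  apply nu_not_equi m hsym ht
  have h3 := equi_add h1 h2
  have h4 : (x + fun v => Nu m t v - x v) = Nu m t := by
    funext v
    simp only [Pi.add_apply]
    ring
  rwa [h4] at h3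

lemma bridge1 (m : V → V → ℕ) (hsym : ∀ u v, m u v = m v u) [Nonempty V]
    (f : V → ℤ) {a : ℤ} (ha : a ∈ Aset m f) :
    ∃ g : V → ℤ, 0 ≤ g ∧ degSum g - 1 = a - 1 ∧ ¬ EquiEffective m (f - g) := by
  obtain ⟨t, ht, f', hlin, rfl⟩ := ha
  set g : V → ℤ := fun v => max (f' v - Nu m t v) 0 with hgdef
  have hg : (0 : V → ℤ) ≤ g := fun v => le_max_right _ _
  have hdeg : degSum g = degPlus (fun v => f' v - Nu m t v) := rfl
  refine ⟨g, hg, by rw [hdeg], ?_⟩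
  intro hcon
  obtain ⟨z, hz⟩ := hlin
  have h2 : EquiEffective m (fun v => Nu m t v - (f - g) v) := by
    have hl : LinEquiv m (fun v => Nu m t v - (f - g) v)
        (fun v => Nu m t v - (f' v - g v)) := by
      refine ⟨-z, ?_⟩
      funext v
      have := congrFun hz v
      simp only [Pi.add_apply] at this
      simp only [Pi.add_apply, Pi.sub_apply, lap_neg, Pi.neg_apply]
      omega
    refine equi_congr hl (equi_of_nonneg fun v => ?_)
    simp only [Pi.zero_apply, hgdef]
    have h1 := le_max_left (f' v - Nu m t v) (0 : ℤ)
    have h2 := le_max_right (f' v - Nu m t v) (0 : ℤ)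
    omega
  exact not_both m hsym ht hcon h2

lemma bridge2 (m : V → V → ℕ) (hsym : ∀ u v, m u v = m v u)
    (hconn : StronglyConnected m) [Nonempty V]
    (f g : V → ℤ) (hg : 0 ≤ g) (hne : ¬ EquiEffective m (f - g)) :
    ∃ a ∈ Aset m f, a ≤ degSum g := by
  obtain ⟨t, ht, heq⟩ := dichotomy_hard m hsym hconn (f - g) hne
  obtain ⟨h, hh, z, hz⟩ := heq
  set f' : V → ℤ := fun v => Nu m t v + g v - h v with hf'def
  have hlin : LinEquiv m f f' := by
    refine ⟨-z, ?_⟩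
    funext v
    have := congrFun hz v
    simp only [Pi.add_apply, Pi.sub_apply] at this
    simp only [Pi.add_apply, hf'def, lap_neg, Pi.neg_apply]
    omega
  refine ⟨degPlus (fun v => f' v - Nu m t v), ⟨t, ht, f', hlin, rfl⟩, ?_⟩
  refine Finset.sum_le_sum fun v _ => ?_
  have h1 := hg v
  have h2 := hh v
  simp only [Pi.zero_apply] at h1 h2
  simp only [hf'def]
  omega

lemma exists_least_aset (m : V → V → ℕ) [Nonempty V] (f : V → ℤ) :
    ∃ a, IsLeast (Aset m f) a := by
  have hbdd : ∃ b : ℤ, ∀ z : ℤ, z ∈ Aset m f → b ≤ z := by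
    refine ⟨0, fun z hz => ?_⟩
    obtain ⟨t, -, f', -, rfl⟩ := hz
    exact degPlus_nonneg _
  have hne : ∃ z : ℤ, z ∈ Aset m f := by
    set t₀ : V → ℤ := fun x => ((Fintype.equivFin V x : ℕ) : ℤ) with ht₀
    have hinj : Function.Injective t₀ := by
      intro u v h
      simp only [ht₀] at h
      have h2 : ((Fintype.equivFin V) u : ℕ) = ((Fintype.equivFin V) v : ℕ) := by exact_mod_cast h
      exact (Fintype.equivFin V).injective (Fin.val_injective h2)
    exact ⟨_, t₀, hinj, f, linEquiv_refl m f, rfl⟩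
  obtain ⟨a, h1, h2⟩ := Int.exists_least_of_bdd hbdd hne
  exact ⟨a, h1, fun b hb => h2 b hb⟩

lemma divRank_eq (m : V → V → ℕ) (hsym : ∀ u v, m u v = m v u)
    (hconn : StronglyConnected m) [Nonempty V] (f : V → ℤ) {a : ℤ}
    (ha : IsLeast (Aset m f) a) : divRank m f = a - 1 := by
  have hB : IsLeast {d : ℤ | ∃ g : V → ℤ, 0 ≤ g ∧ degSum g - 1 = d ∧
      ¬ EquiEffective m (f - g)} (a - 1) := by
    constructor
    · obtain ⟨g, h1, h2, h3⟩ := bridge1 m hsym f ha.1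
      exact ⟨g, h1, h2, h3⟩
    · rintro d ⟨g, hg, hdeg, hne⟩
      obtain ⟨a', ha', hle⟩ := bridge2 m hsym hconn f g hg hne
      have := ha.2 ha'
      omega
  rw [divRank]
  exact hB.csInf_eq

lemma shift_mem (m : V → V → ℕ) (hsym : ∀ u v, m u v = m v u) (hloop : Loopless m)
    [Nonempty V] (mG : ℕ) (hmG : 2 * mG = ∑ u, ∑ v, m u v)
    (f : V → ℤ) {a : ℤ} (ha : a ∈ Aset m f) :
    (a - (degSum f - (mG : ℤ) + (Fintype.card V : ℤ)))
      ∈ Aset m (fun v => (outdeg m v - 2) - f v) := by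
  obtain ⟨t, ht, f', hlin, rfl⟩ := ha
  have ht' : Function.Injective fun u => -(t u) := fun u v h => ht (neg_inj.mp h)
  obtain ⟨z, hz⟩ := hlin
  have hlin' : LinEquiv m (fun v => (outdeg m v - 2) - f v)
      (fun v => (outdeg m v - 2) - f' v) := by
    refine ⟨-z, ?_⟩
    funext v
    have := congrFun hz v
    simp only [Pi.add_apply] at this
    simp only [Pi.add_apply, lap_neg, Pi.neg_apply]
    omega
  refine ⟨fun u => -(t u), ht', (fun v => (outdeg m v - 2) - f' v), hlin', ?_⟩
  have h1 : (fun v => ((outdeg m v - 2) - f' v) - Nu m (fun u => -(t u)) v)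
      = fun v => -((fun w => f' w - Nu m t w) v) := by
    funext v
    rw [nu_reverse m hsym hloop ht]
    ring
  rw [h1, degPlus_neg]
  have h2 : degSum (fun v => f' v - Nu m t v) = degSum f - ((mG : ℤ) - Fintype.card V) := by
    have h3 : degSum (fun v => f' v - Nu m t v) = degSum f' - degSum (Nu m t) := by
      simp only [degSum, Finset.sum_sub_distrib]
    rw [h3, degSum_nu m hsym hloop ht mG hmG, ← degSum_linEquiv ⟨z, hz⟩]
  rw [h2]
  ring

end RRaux

/-- **Riemann–Roch theorem for graphs** (Baker–Norine).
For an undirected graph `G` (a finite connected loopless multigraph, identified with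
the bidirected digraph `m` with `m u v = m v u`) and any divisor `f`,
`rank(f) - rank(K_G - f) = deg(f) - g + 1`, where `g = m(G) - |V| + 1` and
`K_G(v) = d(v) - 2`. -/
theorem riemann_roch_for_graphs
    {V : Type} [Fintype V] [DecidableEq V] [Nonempty V]
    (m : V → V → ℕ)
    (hsym : ∀ u v, m u v = m v u)
    (hloop : Loopless m)
    (hconn : StronglyConnected m)
    (mG : ℕ) (hmG : 2 * mG = ∑ u, ∑ v, m u v)
    (f : V → ℤ) :
    divRank m f - divRank m (fun v => (outdeg m v - 2) - f v)
      = degSum f - ((mG : ℤ) - (Fintype.card V : ℤ) + 1) + 1 := by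
  obtain ⟨a, ha⟩ := RRaux.exists_least_aset m f
  have houtsum : (∑ v, outdeg m v) = 2 * (mG : ℤ) := by
    have h : ((∑ u, ∑ v, m u v : ℕ) : ℤ) = 2 * mG := by exact_mod_cast hmG.symm
    push_cast at h
    simp only [outdeg]
    exact h
  have hKdeg : degSum (fun v => (outdeg m v - 2) - f v)
      = 2 * (mG : ℤ) - 2 * (Fintype.card V : ℤ) - degSum f := by
    simp only [degSum, Finset.sum_sub_distrib, Finset.sum_const, Finset.card_univ,
      nsmul_eq_mul, mul_one]
    rw [houtsum]
    ring
  have hmemK : IsLeast (RRaux.Aset m (fun v => (outdeg m v - 2) - f v))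
      (a - (degSum f - (mG : ℤ) + (Fintype.card V : ℤ))) := by
    constructor
    · exact RRaux.shift_mem m hsym hloop mG hmG f ha.1
    · rintro a' ha'
      have h2 := RRaux.shift_mem m hsym hloop mG hmG
        (fun v => (outdeg m v - 2) - f v) ha'
      have h3 : (fun v => (outdeg m v - 2) - ((fun w => (outdeg m w - 2) - f w) v)) = f := by
        funext v; ring
      rw [h3] at h2
      have h4 := ha.2 h2
      rw [hKdeg] at h4
      omega
  have hr1 := RRaux.divRank_eq m hsym hconn f ha
  have hr2 := RRaux.divRank_eq m hsym hconn (fun v => (outdeg m v - 2) - f v) hmemK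
  rw [hr1, hr2]
  ring
end

section
/- Let G be a digraph (a finite strongly connected loopless directed multigraph) and let x be a chip-distribution on G. Then either every legal chip-firing game starting from x can be continued indefinitely, or every legal game starting from x terminates after the same number of moves with the same final distribution; moreover, in the terminating case, the number of times each given vertex is fired is the same in every maximal legal game. -/
open Finset

variable {V : Type} [Fintype V] [DecidableEq V]

/-- The result of firing a finite sequence (list) of vertices, in order, starting from `x`. -/
def runList (m : V → V → ℕ) : (V → ℤ) → List V → (V → ℤ)
  | x, [] => x
  | x, v :: l => runList m (fire m x v) l

/-- The list `s` of fired vertices is a legal game starting from `x`: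
every firing is legal (the fired vertex is active). -/
def LegalList (m : V → V → ℕ) : (V → ℤ) → List V → Prop
  | _, [] => True
  | x, v :: l => outdeg m v ≤ x v ∧ LegalList m (fire m x v) l

/-- **Björner–Lovász**: starting from any chip-distribution `x` on a strongly connected
digraph, either every legal game can be continued (hence indefinitely), or every maximal
legal game (one ending with no active vertex) has the same length, the same final
distribution, and fires each vertex the same number of times. -/
lemma fire_comm (m : V → V → ℕ) (x : V → ℤ) (v w : V) :
    fire m (fire m x v) w = fire m (fire m x w) v := by
  funext u; simp only [fire]; ring

lemma runList_count (m : V → V → ℕ) : ∀ (l : List V) (x : V → ℤ) (u : V),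
    runList m x l u = x u + (∑ w, (m w u : ℤ) * l.count w) - outdeg m u * l.count u := by
  intro l
  induction l with
  | nil => intro x u; simp [runList]
  | cons v l ih =>
    intro x u
    rw [runList, ih]
    have hc : ∀ w : V, (((v :: l).count w : ℤ)) = l.count w + if w = v then 1 else 0 := by
      intro w
      rcases eq_or_ne w v with h | h <;> simp [h, List.count_cons] <;> exact h.symm
    simp only [hc, mul_add, Finset.sum_add_distrib, fire]
    simp only [mul_ite, mul_one, mul_zero]
    rw [Finset.sum_ite_eq' Finset.univ v (fun w => (m w u : ℤ))]
    simp only [Finset.mem_univ, if_true]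
    rcases eq_or_ne u v with h | h <;> simp [h] <;> ring

lemma moveFront (m : V → V → ℕ) : ∀ (t : List V) (x : V → ℤ) (v : V),
    LegalList m x t → v ∈ t → outdeg m v ≤ x v →
    ∃ t' : List V, LegalList m (fire m x v) t' ∧ ∀ u, (v :: t').count u = t.count u := by
  intro t
  induction t with
  | nil => intro x v _ hmem; exact absurd hmem List.not_mem_nil
  | cons w t ih =>
    intro x v hleg hmem hv
    rcases eq_or_ne w v with h | h
    · subst h
      exact ⟨t, hleg.2, fun u => rfl⟩
    · have hmem' : v ∈ t := by
        rcases List.mem_cons.mp hmem with h' | h'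
        · exact absurd h'.symm h
        · exact h'
      have hv' : outdeg m v ≤ fire m x w v := by
        have : (0:ℤ) ≤ (m w v : ℤ) := Int.natCast_nonneg _
        simp only [fire, if_neg (Ne.symm h)]
        omega
      obtain ⟨t₂, hleg₂, hcount₂⟩ := ih (fire m x w) v hleg.2 hmem' hv'
      refine ⟨w :: t₂, ⟨?_, ?_⟩, ?_⟩
      · have : (0:ℤ) ≤ (m v w : ℤ) := Int.natCast_nonneg _
        simp only [fire, if_neg h]
        have := hleg.1
        omega
      · rw [fire_comm]; exact hleg₂
      · intro u
        have h1 := hcount₂ u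
        simp only [List.count_cons] at h1 ⊢
        omega

lemma exchange (m : V → V → ℕ) : ∀ (s : List V) (x : V → ℤ) (t : List V),
    LegalList m x s → LegalList m x t → (∀ v, runList m x t v < outdeg m v) →
    ∀ v, s.count v ≤ t.count v := by
  intro s
  induction s with
  | nil => intro x t _ _ _ v; simp
  | cons v s ih =>
    intro x t hs ht hstab
    have hv : outdeg m v ≤ x v := hs.1
    -- v must occur in t
    have hmem : v ∈ t := by
      by_contra hvn
      have hc0 : t.count v = 0 := List.count_eq_zero.mpr hvn
      have := hstab v
      rw [runList_count, hc0] at this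
      have hnn : (0:ℤ) ≤ ∑ w, (m w v : ℤ) * t.count w :=
        Finset.sum_nonneg fun w _ => mul_nonneg (Int.natCast_nonneg _) (Int.natCast_nonneg _)
      push_cast at this
      omega
    obtain ⟨t', hleg', hcount'⟩ := moveFront m t x v ht hmem hv
    have hrun : runList m (fire m x v) t' = runList m x t := by
      funext u
      have : runList m x (v :: t') u = runList m x t u := by
        rw [runList_count, runList_count]
        simp only [hcount']
      rw [← this]; rfl
    have hstab' : ∀ u, runList m (fire m x v) t' u < outdeg m u := by
      intro u; rw [hrun]; exact hstab u
    have hle := ih (fire m x v) t' hs.2 hleg' hstab'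
    intro u
    have h1 := hle u
    have h2 := hcount' u
    simp only [List.count_cons] at h2 ⊢
    omega

lemma length_eq_sum_count : ∀ l : List V, l.length = ∑ v, l.count v := by
  intro l
  induction l with
  | nil => simp
  | cons a l ih =>
    simp only [List.length_cons, ih, List.count_cons]
    rw [Finset.sum_add_distrib]
    simp

/-- main -/
theorem chip_firing_dichotomy
    {V : Type} [Fintype V] [DecidableEq V] [Nonempty V]
    (m : V → V → ℕ) (hloop : Loopless m) (hconn : StronglyConnected m)
    (x : V → ℤ) :
    (∀ s : List V, LegalList m x s → ∃ v, outdeg m v ≤ runList m x s v)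
    ∨ (∀ s t : List V, LegalList m x s → LegalList m x t →
        (∀ v, runList m x s v < outdeg m v) → (∀ v, runList m x t v < outdeg m v) →
        s.length = t.length ∧ runList m x s = runList m x t ∧ ∀ v, s.count v = t.count v) := by
  right
  intro s t hs ht hfs hft
  have hc : ∀ v, s.count v = t.count v := fun v =>
    le_antisymm (exchange m s x t hs ht hft v) (exchange m t x s ht hs hfs v)
  refine ⟨?_, ?_, hc⟩
  · rw [length_eq_sum_count s, length_eq_sum_count t]
    exact Finset.sum_congr rfl fun v _ => hc v
  · funext u
    rw [runList_count, runList_count]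
    simp only [hc]
end

section
/- On a strongly connected digraph G, in any infinite legal chip-firing game every vertex is fired infinitely often. -/
open Finset

variable {V : Type} [Fintype V] [DecidableEq V]

lemma degSum_fire (m : V → V → ℕ) (x : V → ℤ) (v : V) :
    degSum (fire m x v) = degSum x := by
  unfold degSum fire outdeg
  rw [Finset.sum_sub_distrib, Finset.sum_add_distrib, Finset.sum_ite_eq' Finset.univ v]
  simp

lemma degSum_gameState (m : V → V → ℕ) (x : V → ℤ) (s : ℕ → V) (n : ℕ) :
    degSum (gameState m x s n) = degSum x := by
  induction n with
  | zero => rfl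
  | succ n ih => rw [gameState, degSum_fire, ih]

lemma gameState_lower (m : V → V → ℕ) (hloop : Loopless m) (x : V → ℤ) (s : ℕ → V)
    (hs : InfGame m x s) (n : ℕ) (u : V) :
    min 0 (x u) ≤ gameState m x s n u := by
  induction n with
  | zero => exact min_le_right _ _
  | succ n ih =>
    show min 0 (x u) ≤ fire m (gameState m x s n) (s n) u
    unfold fire
    by_cases h : u = s n
    · subst h
      have h1 := hs n
      have hl : m (s n) (s n) = 0 := hloop (s n)
      simp only [if_pos rfl, hl]
      have : (0:ℤ) ≤ gameState m x s n (s n) + ((0:ℕ):ℤ) - outdeg m (s n) := by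
        push_cast; linarith
      exact le_trans (min_le_left _ _) this
    · simp only [if_neg h]
      have h2 : (0 : ℤ) ≤ (m (s n) u : ℤ) := by positivity
      linarith

lemma exists_cross (A : Set V) {r : V → V → Prop} {w v : V}
    (h : Relation.ReflTransGen r w v) (hw : w ∉ A) (hv : v ∈ A) :
    ∃ a b, r a b ∧ a ∉ A ∧ b ∈ A := by
  induction h with
  | refl => exact absurd hv hw
  | @tail c d hwc step ih =>
    by_cases hc : c ∈ A
    · exact ih hc
    · exact ⟨c, d, step, hc, hv⟩

/-- On a strongly connected digraph, in any infinite legal chip-firing game every vertex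
is fired infinitely often. -/
theorem every_vertex_fires_infinitely_often
    {V : Type} [Fintype V] [DecidableEq V] [Nonempty V]
    (m : V → V → ℕ) (hloop : Loopless m) (hconn : StronglyConnected m)
    (x : V → ℤ) (s : ℕ → V) (hs : InfGame m x s) (v : V) (N : ℕ) :
    ∃ n, N ≤ n ∧ s n = v := by
  by_contra hcon
  push_neg at hcon
  set A : Set V := {u | ({n | s n = u}).Finite} with hA
  -- v is fired only finitely often
  have hv : v ∈ A := by
    apply Set.Finite.subset (Set.finite_Iio N)
    intro n hn
    by_contra hn'
    exact hcon n (le_of_not_gt hn') hn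
  -- some vertex fires infinitely often
  have hw : ∃ w, w ∉ A := by
    by_contra hall
    push_neg at hall
    have : (⋃ u : V, {n | s n = u}).Finite :=
      Set.finite_iUnion fun u => hall u
    have huniv : (⋃ u : V, {n | s n = u}) = Set.univ := by
      ext n; simp only [Set.mem_iUnion, Set.mem_univ, iff_true]
      exact ⟨s n, rfl⟩
    rw [huniv] at this
    exact Set.infinite_univ this
  obtain ⟨w, hwA⟩ := hw
  -- find an edge a → b with a fired infinitely often, b finitely often
  obtain ⟨a, b, hab, haA, hbA⟩ := exists_cross A (hconn w v) hwA hv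
  -- after time T, no vertex of A is fired
  have hfin : ({n | s n ∈ A}).Finite := by
    have : {n | s n ∈ A} = ⋃ u ∈ A, {n | s n = u} := by
      ext n; simp
    rw [this]
    exact Set.Finite.biUnion (Set.toFinite A) fun u hu => hu
  obtain ⟨T, hT⟩ := hfin.bddAbove
  have hTA : ∀ n, T < n → s n ∉ A := by
    intro n hn hmem
    exact absurd (hT hmem) (not_le_of_gt hn)
  set T' := T + 1 with hT'def
  have hTA' : ∀ n, T' ≤ n → s n ∉ A := fun n hn => hTA n (by omega)
  -- a is fired infinitely often: arbitrarily late
  have haInf : ∀ k, ∃ n, k ≤ n ∧ s n = a := by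
    intro k
    have : ({n | s n = a}).Infinite := haA
    obtain ⟨n, hn1, hn2⟩ := this.exists_gt k
    exact ⟨n, le_of_lt hn2, hn1⟩
  -- monotonicity of chips at b after T'
  have hmono : ∀ n n', T' ≤ n → n ≤ n' →
      gameState m x s n b ≤ gameState m x s n' b := by
    intro n n' hn hnn'
    induction n' with
    | zero => omega
    | succ k ih =>
      rcases Nat.lt_or_ge n (k+1) with hlt | hge
      · have hk : gameState m x s n b ≤ gameState m x s k b := ih (by omega)
        have hsk : s k ≠ b := by
          intro he
          exact hTA' k (by omega) (he ▸ hbA)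
        show gameState m x s n b ≤ fire m (gameState m x s k) (s k) b
        unfold fire
        have h2 : (0 : ℤ) ≤ (m (s k) b : ℤ) := by positivity
        rw [if_neg (fun h => hsk h.symm)]
        linarith
      · have : n = k + 1 := by omega
        subst this; exact le_refl _
  -- each firing of a strictly increases chips at b
  have hstep : ∀ n, s n = a → gameState m x s n b + 1 ≤ gameState m x s (n+1) b := by
    intro n hsn
    show gameState m x s n b + 1 ≤ fire m (gameState m x s n) (s n) b
    unfold fire
    have hba : b ≠ a := by
      intro he; exact haA (he ▸ hbA)
    rw [if_neg (by rw [hsn]; exact hba)]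
    rw [hsn]
    have : (1 : ℤ) ≤ (m a b : ℤ) := by exact_mod_cast hab
    linarith
  -- arbitrarily many chips accumulate at b
  have hgrow : ∀ i : ℕ, ∃ n, T' ≤ n ∧ gameState m x s T' b + i ≤ gameState m x s n b := by
    intro i
    induction i with
    | zero => exact ⟨T', le_refl _, by simp⟩
    | succ i ih =>
      obtain ⟨n, hn1, hn2⟩ := ih
      obtain ⟨k, hk1, hk2⟩ := haInf n
      have h1 : gameState m x s n b ≤ gameState m x s k b := hmono n k hn1 hk1
      have h2 := hstep k hk2
      exact ⟨k + 1, by omega, by push_cast; linarith⟩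
  -- but chips at b are bounded above
  have hupper : ∀ n, gameState m x s n b ≤
      degSum x - ∑ u ∈ Finset.univ.erase b, min 0 (x u) := by
    intro n
    have hsum := degSum_gameState m x s n
    have hsplit : gameState m x s n b + ∑ u ∈ Finset.univ.erase b, gameState m x s n u
        = degSum x := by
      rw [← hsum]
      unfold degSum
      rw [Finset.add_sum_erase _ _ (Finset.mem_univ b)]
    have hterm : ∑ u ∈ Finset.univ.erase b, min 0 (x u)
        ≤ ∑ u ∈ Finset.univ.erase b, gameState m x s n u :=
      Finset.sum_le_sum fun u _ => gameState_lower m hloop x s hs n u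
    linarith
  -- contradiction
  obtain ⟨n, hn1, hn2⟩ := hgrow
    ((degSum x - ∑ u ∈ Finset.univ.erase b, min 0 (x u) - gameState m x s T' b + 1).toNat)
  have h3 := hupper n
  have h4 := Int.self_le_toNat
    (degSum x - ∑ u ∈ Finset.univ.erase b, min 0 (x u) - gameState m x s T' b + 1)
  linarith
end

section
/- Let G be a strongly connected digraph and let x, y be chip-distributions on G with x ∼ y (linearly equivalent). Then x is terminating if and only if y is terminating. -/
open Finset

variable {V : Type} [Fintype V] [DecidableEq V]

set_option linter.unusedSectionVars false

section Aux
variable {V : Type} [Fintype V] [DecidableEq V]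
variable (m : V → V → ℕ)

/-- number of times `v` was fired among the first `n` steps -/
def cnt (s : ℕ → V) (n : ℕ) (v : V) : ℕ :=
  ((Finset.range n).filter (fun k => s k = v)).card

lemma cnt_eq_sum (s : ℕ → V) (n : ℕ) (v : V) :
    cnt s n v = ∑ k ∈ Finset.range n, if s k = v then 1 else 0 :=
  Finset.card_filter _ _

lemma cnt_zero (s : ℕ → V) (v : V) : cnt s 0 v = 0 := by simp [cnt]

lemma cnt_succ (s : ℕ → V) (n : ℕ) (v : V) :
    cnt s (n + 1) v = cnt s n v + if s n = v then 1 else 0 := by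
  rw [cnt_eq_sum, cnt_eq_sum, Finset.sum_range_succ]

lemma cnt_mono (s : ℕ → V) {a b : ℕ} (hab : a ≤ b) (v : V) : cnt s a v ≤ cnt s b v := by
  exact Finset.card_le_card (Finset.filter_subset_filter _ (by
    intro k hk; simp only [Finset.mem_range] at *; omega))

lemma lap_add (a b : V → ℤ) (u : V) :
    lap m (fun v => a v + b v) u = lap m a u + lap m b u := by
  simp only [lap, mul_add, Finset.sum_add_distrib]; ring

lemma lap_neg (a : V → ℤ) (u : V) :
    lap m (fun v => -a v) u = -lap m a u := by
  simp only [lap, mul_neg, Finset.sum_neg_distrib]; ring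

lemma lap_smul (k : ℤ) (a : V → ℤ) (u : V) :
    lap m (fun v => k * a v) u = k * lap m a u := by
  unfold lap
  rw [mul_sub, Finset.mul_sum]
  congr 1
  · exact Finset.sum_congr rfl fun v _ => by ring
  · ring

lemma lap_sum (z : V → ℤ) : ∑ u, lap m z u = 0 := by
  unfold lap
  rw [Finset.sum_sub_distrib, Finset.sum_comm]
  simp only [outdeg, Finset.sum_mul, Finset.mul_sum]
  rw [Finset.sum_comm (f := fun u v => (m u v : ℤ) * z u)]
  simp [mul_comm]

lemma lap_le_lap (a b : V → ℤ) (u : V) (hab : ∀ v, a v ≤ b v) (hu : a u = b u) :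
    lap m a u ≤ lap m b u := by
  unfold lap
  rw [hu]
  apply sub_le_sub_right
  apply Finset.sum_le_sum
  intro v _
  exact mul_le_mul_of_nonneg_left (hab v) (by positivity)

lemma gameState_succ (x : V → ℤ) (s : ℕ → V) (n : ℕ) (u : V) :
    gameState m x s (n + 1) u
      = gameState m x s n u + (m (s n) u : ℤ) - (if u = s n then outdeg m (s n) else 0) := rfl

lemma gameState_eq (x : V → ℤ) (s : ℕ → V) (n : ℕ) (u : V) :
    gameState m x s n u = x u + lap m (fun v => (cnt s n v : ℤ)) u := by
  induction n with
  | zero => simp [gameState, lap, cnt_zero]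
  | succ n ih =>
    rw [gameState_succ, ih]
    have hfe : (fun v => (cnt s (n+1) v : ℤ))
        = fun v => (cnt s n v : ℤ) + (if s n = v then (1:ℤ) else 0) := by
      funext v; rw [cnt_succ]; push_cast; split <;> simp
    rw [hfe, lap_add m (fun v => (cnt s n v : ℤ)) (fun v => if s n = v then (1:ℤ) else 0)]
    have h1 : lap m (fun v => if s n = v then (1:ℤ) else 0) u
        = (m (s n) u : ℤ) - (if u = s n then outdeg m (s n) else 0) := by
      unfold lap
      rw [Finset.sum_congr rfl (fun v _ => by rw [mul_ite, mul_one, mul_zero]),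
        Finset.sum_ite_eq]
      simp only [Finset.mem_univ, if_true]
      by_cases h : u = s n
      · subst h; simp
      · have h2 : ¬ (s n = u) := fun hh => h hh.symm
        simp [h, h2]
    rw [h1]; ring

end Aux
section Aux2
variable {V : Type} [Fintype V] [DecidableEq V]
variable (m : V → V → ℕ)

lemma gameState_mono (x : V → ℤ) (s : ℕ → V) {a b : ℕ} (hab : a ≤ b) (u : V)
    (h : ∀ k, a ≤ k → k < b → s k ≠ u) :
    gameState m x s a u ≤ gameState m x s b u := by
  induction b with
  | zero =>
    have : a = 0 := by omega
    subst this; exact le_refl _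
  | succ b ih =>
    by_cases hb : a = b + 1
    · subst hb; exact le_refl _
    · have h1 := ih (by omega) (fun k hk hkb => h k hk (by omega))
      rw [gameState_succ]
      have hsb : u ≠ s b := fun he => h b (by omega) (by omega) he.symm
      rw [if_neg hsb, sub_zero]
      have h2 : (0:ℤ) ≤ (m (s b) u : ℤ) := by positivity
      linarith

lemma gameState_nonneg (hloop : Loopless m) (x : V → ℤ) (s : ℕ → V) (hs : InfGame m x s)
    {u : V} {k : ℕ} (hk : s k = u) : ∀ n, k < n → 0 ≤ gameState m x s n u := by
  intro n
  induction n with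
  | zero => omega
  | succ n ih =>
    intro hn
    by_cases hsn : s n = u
    · have h1 := hs n
      rw [hsn] at h1
      rw [gameState_succ, hsn, if_pos rfl]
      have h2 : m u u = 0 := hloop u
      rw [h2]
      push_cast
      linarith
    · by_cases hkn : k < n
      · have h0 := ih hkn
        rw [gameState_succ, if_neg (fun he => hsn he.symm), sub_zero]
        have h2 : (0:ℤ) ≤ (m (s n) u : ℤ) := by positivity
        linarith
      · have : k = n := by omega
        exact absurd (this ▸ hk) hsn

lemma sum_gameState (x : V → ℤ) (s : ℕ → V) (n : ℕ) :
    ∑ v, gameState m x s n v = ∑ v, x v := by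
  rw [Finset.sum_congr rfl fun v _ => gameState_eq m x s n v, Finset.sum_add_distrib,
    lap_sum, add_zero]

lemma exists_cross_s3 (P : V → Prop) {a b : V} (h : Relation.ReflTransGen (fun a b => 0 < m a b) a b)
    (ha : ¬ P a) (hb : P b) : ∃ c d, ¬ P c ∧ P d ∧ 0 < m c d := by
  revert hb
  induction h with
  | refl => exact fun hb => absurd hb ha
  | @tail b c h1 h2 ih =>
    intro hc
    by_cases hB : P b
    · exact ih hB
    · exact ⟨b, c, hB, hc, h2⟩

lemma fires_infinitely (hloop : Loopless m) (hconn : StronglyConnected m)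
    (x : V → ℤ) (s : ℕ → V) (hs : InfGame m x s) (v : V) (N : ℕ) :
    ∃ n, N ≤ n ∧ s n = v := by
  classical
  by_contra hcon
  push_neg at hcon
  set S : Finset V := Finset.univ.filter (fun w => ∃ M, ∀ n, M ≤ n → s n ≠ w) with hSdef
  have hvS : v ∈ S := Finset.mem_filter.2 ⟨Finset.mem_univ _, ⟨N, hcon⟩⟩
  have hFex : ∃ w, w ∉ S := by
    by_contra hall
    push_neg at hall
    have hbd : ∀ w : V, ∃ M, ∀ n, M ≤ n → s n ≠ w := fun w => (Finset.mem_filter.1 (hall w)).2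
    choose Mf hMf using hbd
    exact hMf _ _ (Finset.le_sup (Finset.mem_univ _)) rfl
  obtain ⟨w0, hw0⟩ := hFex
  have hinf : ∀ w, w ∉ S → ∀ M, ∃ n, M ≤ n ∧ s n = w := by
    intro w hw M
    by_contra h
    push_neg at h
    exact hw (Finset.mem_filter.2 ⟨Finset.mem_univ _, ⟨M, h⟩⟩)
  -- bound N0 after which no vertex of S fires
  have hbd : ∀ w : V, ∃ M, w ∈ S → ∀ n, M ≤ n → s n ≠ w := by
    intro w
    by_cases hw : w ∈ S
    · obtain ⟨M, hM⟩ := (Finset.mem_filter.1 hw).2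
      exact ⟨M, fun _ => hM⟩
    · exact ⟨0, fun h => absurd h hw⟩
  choose Mf hMf using hbd
  set N0 := Finset.univ.sup Mf with hN0def
  have hN0 : ∀ n, N0 ≤ n → s n ∉ S := by
    intro n hn hmem
    exact hMf (s n) hmem n (le_trans (Finset.le_sup (Finset.mem_univ _)) hn) rfl
  -- times at which each non-S vertex has fired
  have hbd2 : ∀ w : V, ∃ t, w ∉ S → s t = w := by
    intro w
    by_cases hw : w ∈ S
    · exact ⟨0, fun h => absurd hw h⟩
    · obtain ⟨n, _, hn⟩ := hinf w hw 0
      exact ⟨n, fun _ => hn⟩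
  choose tf htf using hbd2
  set N1 := max N0 (Finset.univ.sup tf + 1) with hN1def
  -- lower bounds for all vertices after N1
  have hlow : ∀ n, N1 ≤ n → ∀ u : V,
      (if u ∈ S then gameState m x s N0 u else 0) ≤ gameState m x s n u := by
    intro n hn u
    by_cases hu : u ∈ S
    · rw [if_pos hu]
      refine gameState_mono m x s (le_trans (le_trans (le_max_left _ _) hn) (le_refl _)) u ?_
      intro k hk _ hku
      exact (hN0 k hk) (hku ▸ hu)
    · rw [if_neg hu]
      refine gameState_nonneg m hloop x s hs (htf u hu) n ?_
      have h1 : tf u ≤ Finset.univ.sup tf := Finset.le_sup (Finset.mem_univ _)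
      have h2 : Finset.univ.sup tf + 1 ≤ N1 := le_max_right _ _
      omega
  -- upper bound for any vertex after N1
  have hup : ∀ (u : V) (n : ℕ), N1 ≤ n → gameState m x s n u ≤
      (∑ w, x w) - ∑ w ∈ Finset.univ.erase u, (if w ∈ S then gameState m x s N0 w else 0) := by
    intro u n hn
    have hsum := sum_gameState m x s n
    have heq : gameState m x s n u
        = (∑ w, x w) - ∑ w ∈ Finset.univ.erase u, gameState m x s n w := by
      rw [← hsum, ← Finset.add_sum_erase _ _ (Finset.mem_univ u)]
      ring
    rw [heq]
    exact sub_le_sub_left (Finset.sum_le_sum (fun w _ => hlow n hn w)) _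
  -- crossing edge from outside S into S
  obtain ⟨c, d, hc, hd, hcd⟩ := exists_cross_s3 m (· ∈ S) (hconn w0 v) hw0 hvS
  -- d's chips grow without bound
  have hgrow : ∀ K : ℕ, ∃ n, N1 ≤ n ∧ gameState m x s N1 d + K ≤ gameState m x s n d := by
    intro K
    induction K with
    | zero => exact ⟨N1, le_refl _, by simp⟩
    | succ K ih =>
      obtain ⟨n, hn, hval⟩ := ih
      obtain ⟨n', hn', hsn'⟩ := hinf c hc n
      have hN0n : N0 ≤ n := le_trans (le_max_left _ _) hn
      have h1 : gameState m x s n d ≤ gameState m x s n' d := by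
        refine gameState_mono m x s hn' d ?_
        intro k hk _ hkd
        exact (hN0 k (le_trans hN0n hk)) (hkd ▸ hd)
      have h2 : gameState m x s (n' + 1) d
          = gameState m x s n' d + (m c d : ℤ) := by
        rw [gameState_succ, hsn']
        have hdc : d ≠ c := fun he => hc (he ▸ hd)
        rw [if_neg hdc, sub_zero]
      have h3 : (1:ℤ) ≤ (m c d : ℤ) := by exact_mod_cast hcd
      refine ⟨n' + 1, by omega, ?_⟩
      rw [h2]
      push_cast
      linarith
  -- contradiction
  set C := (∑ w, x w) - ∑ w ∈ Finset.univ.erase d, (if w ∈ S then gameState m x s N0 w else 0)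
    with hCdef
  obtain ⟨n, hn, hval⟩ := hgrow (C - gameState m x s N1 d + 1).toNat
  have hub := hup d n hn
  have hK : C - gameState m x s N1 d + 1 ≤ ((C - gameState m x s N1 d + 1).toNat : ℤ) :=
    Int.self_le_toNat _
  rw [← hCdef] at hub
  linarith

end Aux2
section Aux3
variable {V : Type} [Fintype V] [DecidableEq V]
variable (m : V → V → ℕ)

lemma lap_balance (q : V → ℤ) (h : ∀ u, lap m q u = 0) (u : V) :
    ∑ w, (m w u : ℤ) * q w = outdeg m u * q u := by
  have := h u
  unfold lap at this
  linarith

/-- any nonzero vector in the kernel of the Laplacian with a positive entry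
is everywhere positive (strong connectivity). -/
lemma kernel_pos (hconn : StronglyConnected m) (q : V → ℤ) (hq : ∀ u, lap m q u = 0)
    (hpos : ∃ v, 0 < q v) : ∀ v, 0 < q v := by
  classical
  obtain ⟨v0, hv0⟩ := hpos
  intro v
  by_contra hv
  push_neg at hv
  set S : Finset V := Finset.univ.filter (fun w => 0 < q w) with hSdef
  have hv0S : v0 ∈ S := Finset.mem_filter.2 ⟨Finset.mem_univ _, hv0⟩
  have hvS : v ∉ S := fun h => absurd (Finset.mem_filter.1 h).2 (not_lt.2 hv)
  -- balance summed over S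
  have hsum : ∑ u ∈ S, ∑ w, (m w u : ℤ) * q w = ∑ u ∈ S, ∑ w, (m u w : ℤ) * q u := by
    calc ∑ u ∈ S, ∑ w, (m w u : ℤ) * q w = ∑ u ∈ S, outdeg m u * q u :=
          Finset.sum_congr rfl (fun u _ => lap_balance m q hq u)
      _ = ∑ u ∈ S, ∑ w, (m u w : ℤ) * q u := by
          refine Finset.sum_congr rfl (fun u _ => ?_)
          rw [outdeg, Finset.sum_mul]
  -- split inner sums into S and not S
  have hsplit : ∀ (f : V → V → ℤ), ∑ u ∈ S, ∑ w, f u w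
      = ∑ u ∈ S, ∑ w ∈ S, f u w + ∑ u ∈ S, ∑ w ∈ Finset.univ.filter (fun w => ¬ 0 < q w), f u w := by
    intro f
    rw [← Finset.sum_add_distrib]
    refine Finset.sum_congr rfl (fun u _ => ?_)
    rw [hSdef]
    exact (Finset.sum_filter_add_sum_filter_not _ _ _).symm
  rw [hsplit, hsplit] at hsum
  have hdiag : ∑ u ∈ S, ∑ w ∈ S, (m w u : ℤ) * q w = ∑ u ∈ S, ∑ w ∈ S, (m u w : ℤ) * q u :=
    Finset.sum_comm
  rw [hdiag] at hsum
  have hAB : ∑ u ∈ S, ∑ w ∈ Finset.univ.filter (fun w => ¬ 0 < q w), (m w u : ℤ) * q w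
      = ∑ u ∈ S, ∑ w ∈ Finset.univ.filter (fun w => ¬ 0 < q w), (m u w : ℤ) * q u := by
    omega
  have hA : ∑ u ∈ S, ∑ w ∈ Finset.univ.filter (fun w => ¬ 0 < q w), (m w u : ℤ) * q w ≤ 0 := by
    refine Finset.sum_nonpos (fun u _ => Finset.sum_nonpos (fun w hw => ?_))
    have hqw : q w ≤ 0 := le_of_not_gt (Finset.mem_filter.1 hw).2
    exact mul_nonpos_of_nonneg_of_nonpos (by positivity) hqw
  have hB : ∀ u ∈ S, ∀ w ∈ Finset.univ.filter (fun w => ¬ 0 < q w), 0 ≤ (m u w : ℤ) * q u := by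
    intro u hu w _
    have hqu : 0 < q u := (Finset.mem_filter.1 hu).2
    positivity
  have hB0 : ∑ u ∈ S, ∑ w ∈ Finset.univ.filter (fun w => ¬ 0 < q w), (m u w : ℤ) * q u = 0 := by
    have h1 : 0 ≤ ∑ u ∈ S, ∑ w ∈ Finset.univ.filter (fun w => ¬ 0 < q w), (m u w : ℤ) * q u :=
      Finset.sum_nonneg (fun u hu => Finset.sum_nonneg (fun w hw => hB u hu w hw))
    omega
  -- hence there are no edges from S to outside S
  have hzero : ∀ u ∈ S, ∀ w ∈ Finset.univ.filter (fun w => ¬ 0 < q w), (m u w : ℤ) * q u = 0 := by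
    have := (Finset.sum_eq_zero_iff_of_nonneg
      (fun u hu => Finset.sum_nonneg (fun w hw => hB u hu w hw))).1 hB0
    intro u hu w hw
    exact (Finset.sum_eq_zero_iff_of_nonneg (fun w hw => hB u hu w hw)).1 (this u hu) w hw
  -- crossing edge from S to outside S
  obtain ⟨c, d, hc, hd, hcd⟩ := exists_cross_s3 m (· ∉ S) (hconn v0 v) (not_not.2 hv0S) hvS
  have hcS : c ∈ S := not_not.1 hc
  have hdS : d ∈ Finset.univ.filter (fun w => ¬ 0 < q w) := by
    refine Finset.mem_filter.2 ⟨Finset.mem_univ _, ?_⟩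
    intro hqd
    exact hd (Finset.mem_filter.2 ⟨Finset.mem_univ _, hqd⟩)
  have := hzero c hcS d hdS
  have hqc : 0 < q c := (Finset.mem_filter.1 hcS).2
  have h1 : (1:ℤ) ≤ (m c d : ℤ) := by exact_mod_cast hcd
  nlinarith

lemma exists_period [Nonempty V] (hconn : StronglyConnected m) :
    ∃ p : V → ℤ, (∀ v, 0 < p v) ∧ ∀ u, lap m p u = 0 := by
  classical
  set M : Matrix V V ℤ :=
    Matrix.of (fun u v => (m v u : ℤ) - if u = v then outdeg m u else 0) with hMdef
  have hMv : ∀ (z : V → ℤ) (u : V), M.mulVec z u = lap m z u := by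
    intro z u
    simp only [Matrix.mulVec, dotProduct, hMdef, Matrix.of_apply, lap, sub_mul,
      Finset.sum_sub_distrib, ite_mul, zero_mul]
    rw [Finset.sum_ite_eq]
    simp
  have hdet : M.det = 0 := by
    have h1 : M.transpose.mulVec (fun _ => (1:ℤ)) = 0 := by
      funext v
      simp only [Matrix.mulVec, dotProduct, Matrix.transpose_apply, hMdef,
        Matrix.of_apply, mul_one, Finset.sum_sub_distrib]
      rw [Finset.sum_ite_eq']
      simp [outdeg]
    have h2 : ∃ z, z ≠ 0 ∧ M.transpose.mulVec z = 0 := by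
      refine ⟨fun _ => 1, ?_, h1⟩
      intro h
      have := congrFun h (Classical.arbitrary V)
      simp at this
    obtain ⟨z, hz1, hz2⟩ := h2
    have hdt : M.transpose.det = 0 := Matrix.exists_mulVec_eq_zero_iff.1 ⟨z, hz1, hz2⟩
    rwa [Matrix.det_transpose] at hdt
  obtain ⟨p, hp0, hpz⟩ := Matrix.exists_mulVec_eq_zero_iff.2 hdet
  have hlapp : ∀ u, lap m p u = 0 := by
    intro u
    rw [← hMv]
    exact congrFun hpz u
  by_cases hpos : ∃ v, 0 < p v
  · exact ⟨p, kernel_pos m hconn p hlapp hpos, hlapp⟩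
  · push_neg at hpos
    have hlapn : ∀ u, lap m (fun v => -p v) u = 0 := by
      intro u
      rw [lap_neg, hlapp, neg_zero]
    have hneg : ∃ v, 0 < -p v := by
      by_contra h
      push_neg at h
      apply hp0
      funext v
      have h1 := hpos v
      have h2 := h v
      simp only [Pi.zero_apply]
      omega
    exact ⟨fun v => -p v, kernel_pos m hconn _ hlapn hneg, hlapn⟩

end Aux3
section Aux4
variable {V : Type} [Fintype V] [DecidableEq V]
variable (m : V → V → ℕ)

/-- If `x` admits an infinite legal game and `z ≥ 0`, then `x + lap z`
admits an infinite legal game (skip the first `z v` firings of each `v`). -/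
lemma nonterm_of_lap_add (hloop : Loopless m) (hconn : StronglyConnected m)
    (x z : V → ℤ) (hz : ∀ v, 0 ≤ z v) (s : ℕ → V) (hs : InfGame m x s) :
    ∃ s' : ℕ → V, InfGame m (fun u => x u + lap m z u) s' := by
  classical
  -- counts tend to infinity
  have hK : ∀ (v : V) (K : ℕ), ∃ N, K ≤ cnt s N v := by
    intro v K
    induction K with
    | zero => exact ⟨0, Nat.zero_le _⟩
    | succ K ih =>
      obtain ⟨N, hN⟩ := ih
      obtain ⟨n, hn, hsn⟩ := fires_infinitely m hloop hconn x s hs v N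
      refine ⟨n + 1, ?_⟩
      rw [cnt_succ, if_pos hsn]
      have := cnt_mono s hn v
      omega
  -- a time after which every step is "good"
  have hNall : ∃ N, ∀ v, z v ≤ (cnt s N v : ℤ) := by
    have h1 : ∀ v : V, ∃ N, z v ≤ (cnt s N v : ℤ) := by
      intro v
      obtain ⟨N, hN⟩ := hK v (z v).toNat
      refine ⟨N, ?_⟩
      have h2 : z v ≤ ((z v).toNat : ℤ) := Int.self_le_toNat _
      have h3 : ((z v).toNat : ℤ) ≤ (cnt s N v : ℤ) := by exact_mod_cast hN
      omega
    choose Nf hNf using h1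
    refine ⟨Finset.univ.sup Nf, fun v => ?_⟩
    have h2 : (cnt s (Nf v) v : ℤ) ≤ (cnt s (Finset.univ.sup Nf) v : ℤ) := by
      exact_mod_cast cnt_mono s (Finset.le_sup (Finset.mem_univ _)) v
    exact le_trans (hNf v) h2
  obtain ⟨N, hN⟩ := hNall
  set good : ℕ → Prop := fun n => z (s n) ≤ (cnt s n (s n) : ℤ) with hgooddef
  have hgoodN : ∀ n, N ≤ n → good n := by
    intro n hn
    have h1 : (cnt s N (s n) : ℤ) ≤ (cnt s n (s n) : ℤ) := by
      exact_mod_cast cnt_mono s hn (s n)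
    exact le_trans (hN (s n)) h1
  have hginf : (setOf good).Infinite := by
    apply Set.Infinite.mono (s := Set.Ici N)
    · intro n hn
      exact hgoodN n hn
    · exact Set.Ici_infinite N
  haveI : DecidablePred good := fun n => Int.decLe _ _
  set s' : ℕ → V := fun k => s (Nat.nth good k) with hs'def
  -- the count invariant
  have inv : ∀ n (v : V),
      (cnt s' (Nat.count good n) v : ℤ) = (((cnt s n v : ℤ) - z v).toNat : ℤ) := by
    intro n
    induction n with
    | zero =>
      intro v
      simp only [Nat.count_zero, cnt_zero]
      have := hz v
      omega
    | succ n ih =>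
      intro v
      rw [Nat.count_succ]
      by_cases hg : good n
      · rw [if_pos hg]
        have hs'n : s' (Nat.count good n) = s n := by
          rw [hs'def]
          simp only
          rw [Nat.nth_count hg]
        rw [cnt_succ, hs'n, cnt_succ]
        have hIH := ih v
        by_cases hv : s n = v
        · rw [if_pos hv]
          subst hv
          have hgood2 : z (s n) ≤ (cnt s n (s n) : ℤ) := hg
          push_cast
          omega
        · rw [if_neg hv]
          push_cast at hIH ⊢
          omega
      · rw [if_neg hg, Nat.add_zero]
        have hIH := ih v
        rw [cnt_succ]
        by_cases hv : s n = v
        · rw [if_pos hv]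
          subst hv
          have hbad : ¬ z (s n) ≤ (cnt s n (s n) : ℤ) := hg
          push_cast
          omega
        · rw [if_neg hv]
          push_cast at hIH ⊢
          omega
  -- legality
  refine ⟨s', fun k => ?_⟩
  set n := Nat.nth good k with hndef
  have hgd : good n := Nat.nth_mem_of_infinite hginf k
  have hck : Nat.count good n = k := Nat.count_nth_of_infinite hginf k
  have hinv : ∀ v, (cnt s' k v : ℤ) = (((cnt s n v : ℤ) - z v).toNat : ℤ) := by
    intro v
    rw [← hck]
    exact inv n v
  have hs'k : s' k = s n := rfl
  rw [hs'k]
  have hstate : gameState m (fun u => x u + lap m z u) s' k (s n)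
      = x (s n) + lap m (fun v => z v + (cnt s' k v : ℤ)) (s n) := by
    rw [gameState_eq, lap_add m z (fun v => (cnt s' k v : ℤ))]
    ring
  rw [hstate]
  have horig := hs n
  rw [gameState_eq] at horig
  refine le_trans horig ?_
  have hle : lap m (fun v => (cnt s n v : ℤ)) (s n)
      ≤ lap m (fun v => z v + (cnt s' k v : ℤ)) (s n) := by
    apply lap_le_lap
    · intro v
      rw [hinv v]
      have := hz v
      omega
    · rw [hinv (s n)]
      have hgood2 : z (s n) ≤ (cnt s n (s n) : ℤ) := hgd
      omega
  linarith

end Aux4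
section Aux5
variable {V : Type} [Fintype V] [DecidableEq V]
variable (m : V → V → ℕ)

lemma nonterm_transfer [Nonempty V] (hloop : Loopless m) (hconn : StronglyConnected m)
    (a b : V → ℤ) (hab : LinEquiv m a b) (hb : ¬ Terminating m b) : ¬ Terminating m a := by
  obtain ⟨z, hz⟩ := hab
  obtain ⟨p, hp, hlp⟩ := exists_period m hconn
  rw [Terminating, not_not] at hb ⊢
  obtain ⟨s, hs⟩ := hb
  set k : ℤ := ((Finset.univ.sup (fun v => (-(z v)).toNat) : ℕ) : ℤ) with hkdef
  have hk0 : 0 ≤ k := by positivity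
  set z' : V → ℤ := fun v => z v + k * p v with hz'def
  have hz' : ∀ v, 0 ≤ z' v := by
    intro v
    have h1 : ((-(z v)).toNat : ℤ) ≤ k := by
      rw [hkdef]
      exact_mod_cast Finset.le_sup (f := fun v => (-(z v)).toNat) (Finset.mem_univ v)
    have h2 : -(z v) ≤ ((-(z v)).toNat : ℤ) := Int.self_le_toNat _
    have h3 : k * 1 ≤ k * p v := mul_le_mul_of_nonneg_left (hp v) hk0
    simp only [hz'def]
    nlinarith
  have hlapz' : ∀ u, lap m z' u = lap m z u := by
    intro u
    rw [hz'def]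
    rw [lap_add m z (fun v => k * p v), lap_smul, hlp, mul_zero, add_zero]
  have haeq : a = fun u => b u + lap m z' u := by
    funext u
    have h1 := congrFun hz u
    simp only [Pi.add_apply] at h1
    rw [hlapz' u, h1]
  obtain ⟨s', hs'⟩ := nonterm_of_lap_add m hloop hconn b z' hz' s hs
  rw [haeq]
  exact ⟨s', hs'⟩

end Aux5

/-- Linearly equivalent chip-distributions on a strongly connected digraph are
simultaneously terminating. -/
theorem terminating_iff_of_linEquiv
    {V : Type} [Fintype V] [DecidableEq V] [Nonempty V]
    (m : V → V → ℕ) (hloop : Loopless m) (hconn : StronglyConnected m)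
    (x y : V → ℤ) (hxy : LinEquiv m x y) :
    Terminating m x ↔ Terminating m y := by
  have hsymm : LinEquiv m y x := by
    obtain ⟨z, hz⟩ := hxy
    refine ⟨fun v => -z v, ?_⟩
    funext u
    have h1 := congrFun hz u
    simp only [Pi.add_apply] at h1 ⊢
    rw [lap_neg]
    linarith
  constructor
  · intro hx
    by_contra hy
    exact nonterm_transfer m hloop hconn x y hxy hy hx
  · intro hy
    by_contra hx
    exact nonterm_transfer m hloop hconn y x hsymm hx hy
end

section
/- Let G be a strongly connected digraph and let x, y be chip-distributions on G with x ∼ y (linearly equivalent). Then dist(x) = dist(y). -/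
open Finset

variable {V : Type} [Fintype V] [DecidableEq V]

/-- The distance of `x` from the non-terminating distributions:
the minimum degree of a nonnegative `y` such that `x + y` is non-terminating. -/
noncomputable def chipDist (m : V → V → ℕ) (x : V → ℤ) : ℕ :=
  sInf {n : ℕ | ∃ y : V → ℤ, 0 ≤ y ∧ degSum y = (n : ℤ) ∧ ¬ Terminating m (x + y)}

set_option linter.unusedSectionVars false

namespace ChipAux

/-- number of times `v` is fired among the first `n` steps -/
def cnt (s : ℕ → V) (n : ℕ) (v : V) : ℕ := ((Finset.range n).filter (fun k => s k = v)).card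

lemma cnt_zero (s : ℕ → V) (v : V) : cnt s 0 v = 0 := by simp [cnt]

lemma cnt_succ (s : ℕ → V) (n : ℕ) (v : V) :
    cnt s (n+1) v = cnt s n v + if s n = v then 1 else 0 := by
  unfold cnt
  rw [Finset.range_add_one, Finset.filter_insert]
  split
  · rw [Finset.card_insert_of_notMem (by simp)]
  · simp

lemma cnt_mono (s : ℕ → V) {n n' : ℕ} (h : n ≤ n') (v : V) : cnt s n v ≤ cnt s n' v :=
  Finset.card_le_card (Finset.filter_subset_filter _ (Finset.range_subset_range.2 h))

lemma cnt_lt_of_fire (s : ℕ → V) {n j : ℕ} (hn : n ≤ j) (hj : s j = v) :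
    cnt s n v < cnt s (j+1) v :=
  lt_of_le_of_lt (cnt_mono s hn v) (by rw [cnt_succ, hj]; simp)

def cntZ (s : ℕ → V) (n : ℕ) : V → ℤ := fun v => (cnt s n v : ℤ)

lemma lap_add (m : V → V → ℕ) (a b : V → ℤ) : lap m (a + b) = lap m a + lap m b := by
  funext u
  simp [lap, mul_add, Finset.sum_add_distrib]
  ring

lemma lap_sub (m : V → V → ℕ) (a b : V → ℤ) : lap m (a - b) = lap m a - lap m b := by
  funext u
  simp [lap, mul_sub, Finset.sum_sub_distrib]
  ring

lemma lap_zero (m : V → V → ℕ) : lap m (0 : V → ℤ) = 0 := by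
  funext u; simp [lap]

lemma lap_smul (m : V → V → ℕ) (c : ℤ) (a : V → ℤ) :
    lap m (fun v => c * a v) = fun u => c * lap m a u := by
  funext u
  simp only [lap]
  rw [mul_sub, Finset.mul_sum]
  congr 1
  · exact Finset.sum_congr rfl (fun v _ => by ring)
  · ring

lemma gameState_eq (m : V → V → ℕ) (x : V → ℤ) (s : ℕ → V) (n : ℕ) :
    gameState m x s n = x + lap m (cntZ s n) := by
  induction n with
  | zero =>
    have : cntZ s 0 = (0 : V → ℤ) := by funext v; simp [cntZ, cnt_zero]
    simp [gameState, this, lap_zero]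
  | succ n ih =>
    have hsplit : cntZ s (n+1) = cntZ s n + (fun v => if v = s n then (1:ℤ) else 0) := by
      funext v
      simp only [cntZ, cnt_succ, Pi.add_apply]
      push_cast
      by_cases h : s n = v
      · simp [h]
      · simp [h]; exact fun hv => h hv.symm
    show fire m (gameState m x s n) (s n) = _
    rw [ih, hsplit, lap_add]
    funext u
    simp only [fire, Pi.add_apply, lap]
    have h1 : (∑ v, (m v u : ℤ) * (if v = s n then (1:ℤ) else 0)) = (m (s n) u : ℤ) := by
      rw [Finset.sum_eq_single (s n)] <;> simp +contextual
    rw [h1]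
    by_cases h : u = s n <;> simp [h, outdeg] <;> ring

lemma degSum_fire (m : V → V → ℕ) (x : V → ℤ) (v : V) : degSum (fire m x v) = degSum x := by
  unfold degSum fire
  rw [Finset.sum_sub_distrib, Finset.sum_add_distrib]
  have h1 : (∑ u, if u = v then outdeg m v else (0:ℤ)) = outdeg m v := by
    rw [Finset.sum_eq_single v] <;> simp +contextual
  rw [h1, outdeg]
  ring

lemma degSum_gameState (m : V → V → ℕ) (x : V → ℤ) (s : ℕ → V) (n : ℕ) :
    degSum (gameState m x s n) = degSum x := by
  induction n with
  | zero => rfl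
  | succ n ih => rw [show gameState m x s (n+1) = fire m (gameState m x s n) (s n) from rfl,
      degSum_fire, ih]

lemma state_lb (m : V → V → ℕ) (x : V → ℤ) (s : ℕ → V) (h : InfGame m x s) (n : ℕ) (v : V) :
    min (x v) 0 ≤ gameState m x s n v := by
  induction n with
  | zero => exact min_le_left _ _
  | succ n ih =>
    show min (x v) 0 ≤ fire m (gameState m x s n) (s n) v
    unfold fire
    have hm : (0:ℤ) ≤ (m (s n) v : ℤ) := by positivity
    by_cases hv : v = s n
    · subst hv
      rw [if_pos rfl]
      have hleg := h n
      have hm2 : min (x (s n)) 0 ≤ 0 := min_le_right _ _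
      linarith
    · rw [if_neg hv]
      linarith

lemma state_ub (m : V → V → ℕ) (x : V → ℤ) (s : ℕ → V) (h : InfGame m x s) (n : ℕ) (v : V) :
    gameState m x s n v ≤ degSum x - ∑ u, min (x u) 0 := by
  have hsum : ∑ u, gameState m x s n u = degSum x := degSum_gameState m x s n
  have hsplit : ∑ u, gameState m x s n u
      = gameState m x s n v + ∑ u ∈ Finset.univ.erase v, gameState m x s n u :=
    (Finset.add_sum_erase _ _ (Finset.mem_univ v)).symm
  have hlb : ∑ u ∈ Finset.univ.erase v, min (x u) 0
      ≤ ∑ u ∈ Finset.univ.erase v, gameState m x s n u :=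
    Finset.sum_le_sum (fun u _ => state_lb m x s h n u)
  have hlb2 : ∑ u, min (x u) 0
      = min (x v) 0 + ∑ u ∈ Finset.univ.erase v, min (x u) 0 :=
    (Finset.add_sum_erase _ _ (Finset.mem_univ v)).symm
  have hminle : min (x v) 0 ≤ 0 := min_le_right _ _
  omega

lemma infinite_exists_ge {T : Set ℕ} (hT : T.Infinite) (N : ℕ) : ∃ j ∈ T, N ≤ j := by
  by_contra hc
  push_neg at hc
  exact hT (Set.Finite.subset (Set.finite_lt_nat N) (fun j hj => hc j hj))

lemma all_fire (m : V → V → ℕ) (hconn : StronglyConnected m) (x : V → ℤ) (s : ℕ → V)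
    (h : InfGame m x s) : ∀ v N, ∃ j, N ≤ j ∧ s j = v := by
  classical
  set S : Set V := {v | ∀ N, ∃ j, N ≤ j ∧ s j = v} with hS
  have hsome : ∃ v, v ∈ S := by
    obtain ⟨v, hv⟩ := Finite.exists_infinite_fiber s
    refine ⟨v, fun N => ?_⟩
    have hinf : (s ⁻¹' {v}).Infinite := Set.infinite_coe_iff.mp hv
    obtain ⟨j, hj1, hj2⟩ := infinite_exists_ge hinf N
    exact ⟨j, hj2, hj1⟩
  have hstep : ∀ a b, a ∈ S → 0 < m a b → b ∈ S := by
    intro a b ha hm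
    by_contra hb
    have hab : b ≠ a := fun hba => hb (hba ▸ ha)
    simp only [hS, Set.mem_setOf_eq] at hb
    push_neg at hb
    obtain ⟨N, hN⟩ := hb
    have hmono : ∀ n k, N ≤ n → gameState m x s n b ≤ gameState m x s (n + k) b := by
      intro n k hn
      induction k with
      | zero => exact le_refl _
      | succ k ihk =>
        have hne : b ≠ s (n + k) := by
          intro hbs
          exact (hN (n+k) (by omega) hbs.symm).elim
        have : gameState m x s (n + (k+1)) b
            = gameState m x s (n+k) b + (m (s (n+k)) b : ℤ) := by
          show fire m (gameState m x s (n+k)) (s (n+k)) b = _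
          unfold fire
          rw [if_neg hne]
          ring
        have hmnn : (0:ℤ) ≤ (m (s (n+k)) b : ℤ) := by positivity
        omega
    have hgrow : ∀ d : ℕ, ∃ n, N ≤ n ∧ gameState m x s N b + d ≤ gameState m x s n b := by
      intro d
      induction d with
      | zero => exact ⟨N, le_refl N, by simp⟩
      | succ d ihd =>
        obtain ⟨n, hn, hd⟩ := ihd
        obtain ⟨j, hj1, hj2⟩ := ha n
        have hmono1 : gameState m x s n b ≤ gameState m x s j b := by
          have := hmono n (j - n) (hn)
          rwa [Nat.add_sub_cancel' hj1] at this
        have hstepj : gameState m x s (j+1) b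
            = gameState m x s j b + (m a b : ℤ) := by
          show fire m (gameState m x s j) (s j) b = _
          unfold fire
          rw [hj2, if_neg hab]
          ring
        refine ⟨j+1, by omega, ?_⟩
        have hm1 : (1:ℤ) ≤ (m a b : ℤ) := by exact_mod_cast hm
        push_cast
        push_cast at hd
        omega
    obtain ⟨n, hn, hd⟩ := hgrow (degSum x - ∑ u, min (x u) 0 - gameState m x s N b + 1).toNat
    have hub := state_ub m x s h n b
    have htn : (degSum x - ∑ u, min (x u) 0 - gameState m x s N b + 1)
        ≤ ((degSum x - ∑ u, min (x u) 0 - gameState m x s N b + 1).toNat : ℤ) :=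
      Int.self_le_toNat _
    omega
  intro v N
  obtain ⟨u, hu⟩ := hsome
  have hpath := hconn u v
  have hv : v ∈ S := by
    induction hpath with
    | refl => exact hu
    | tail hr hrel ih => exact hstep _ _ ih hrel
  exact hv N

lemma exists_period (m : V → V → ℕ) (hconn : StronglyConnected m) (x : V → ℤ) (s : ℕ → V)
    (h : InfGame m x s) : ∃ p : V → ℤ, (∀ v, 1 ≤ p v) ∧ lap m p = 0 := by
  classical
  set lo := ∑ u, min (x u) 0 with hlodef
  set hi := degSum x - lo with hhidef
  have hlo : ∀ n v, lo ≤ gameState m x s n v := by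
    intro n v
    have h1 : min (x v) 0 ≤ gameState m x s n v := state_lb m x s h n v
    have h2 : lo ≤ min (x v) 0 := by
      have h4 : min (x v) 0 + ∑ u ∈ Finset.univ.erase v, min (x u) 0 = lo := by
        rw [hlodef]; exact Finset.add_sum_erase _ (fun u => min (x u) 0) (Finset.mem_univ v)
      have h3 : ∑ u ∈ Finset.univ.erase v, min (x u) 0 ≤ 0 :=
        Finset.sum_nonpos (fun u _ => min_le_right _ _)
      omega
    omega
  have hhi : ∀ n v, gameState m x s n v ≤ hi := fun n v => state_ub m x s h n v
  let g : ℕ → (V → Set.Icc lo hi) := fun n v => ⟨gameState m x s n v, hlo n v, hhi n v⟩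
  obtain ⟨σ, hσ⟩ := Finite.exists_infinite_fiber g
  have hT : (g ⁻¹' {σ}).Infinite := Set.infinite_coe_iff.mp hσ
  obtain ⟨n1, hn1⟩ := hT.nonempty
  have hall := all_fire m hconn x s h
  choose jf hjf1 hjf2 using fun v => hall v n1
  set M := Finset.univ.sup jf with hM
  obtain ⟨n2, hn2T, hn2⟩ := infinite_exists_ge hT (M+1)
  refine ⟨fun v => (cnt s n2 v : ℤ) - cnt s n1 v, ?_, ?_⟩
  · intro v
    have hj : n1 ≤ jf v := hjf1 v
    have hjM : jf v ≤ M := Finset.le_sup (Finset.mem_univ v)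
    have h1 : cnt s n1 v < cnt s (jf v + 1) v := cnt_lt_of_fire s hj (hjf2 v)
    have h2 : cnt s (jf v + 1) v ≤ cnt s n2 v := cnt_mono s (by omega) v
    push_cast
    omega
  · have hstates : gameState m x s n1 = gameState m x s n2 := by
      funext v
      have e1 : g n1 = σ := hn1
      have e2 : g n2 = σ := hn2T
      have e3 := congrFun e1 v
      have e4 := congrFun e2 v
      have := e3.trans e4.symm
      exact congrArg Subtype.val this
    have h1 := gameState_eq m x s n1
    have h2 := gameState_eq m x s n2
    have hlapeq : lap m (cntZ s n1) = lap m (cntZ s n2) := by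
      funext v
      have := congrFun (h1 ▸ h2 ▸ hstates) v
      simpa using this
    have hpdef : (fun v => (cnt s n2 v : ℤ) - cnt s n1 v) = cntZ s n2 - cntZ s n1 := rfl
    rw [hpdef, lap_sub, hlapeq, sub_self]

lemma nonterm_shift (m : V → V → ℕ) (hconn : StronglyConnected m) (y z : V → ℤ)
    (hz : ∀ v, 0 ≤ z v) (hy : ¬ Terminating m y) : ¬ Terminating m (y + lap m z) := by
  classical
  rw [Terminating, not_not] at hy ⊢
  obtain ⟨s, hs⟩ := hy
  have hall := all_fire m hconn y s hs
  set zN : V → ℕ := fun v => (z v).toNat with hzN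
  have hzcast : ∀ v, (zN v : ℤ) = z v := fun v => Int.toNat_of_nonneg (hz v)
  set keep : ℕ → Prop := fun j => zN (s j) ≤ cnt s j (s j) with hkeep
  have hcnt_unbounded : ∀ v B, ∃ n, B ≤ cnt s n v := by
    intro v B
    induction B with
    | zero => exact ⟨0, Nat.zero_le _⟩
    | succ B ih =>
      obtain ⟨n, hn⟩ := ih
      obtain ⟨j, hj1, hj2⟩ := hall v n
      exact ⟨j+1, by have := cnt_lt_of_fire s hj1 hj2; omega⟩
  have hkey : ∀ N, ∃ j, N ≤ j ∧ keep j := by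
    intro N
    obtain ⟨n, hn⟩ := hcnt_unbounded (s N) (zN (s N))
    obtain ⟨j, hj1, hj2⟩ := hall (s N) (max n N)
    refine ⟨j, le_trans (le_max_right n N) hj1, ?_⟩
    show zN (s j) ≤ cnt s j (s j)
    rw [hj2]
    exact le_trans hn (cnt_mono s (le_trans (le_max_left n N) hj1) (s N))
  have hkinf : (setOf keep).Infinite := by
    by_contra hf
    rw [Set.not_infinite] at hf
    obtain ⟨b, hb⟩ := hf.bddAbove
    obtain ⟨j, hj1, hj2⟩ := hkey (b+1)
    have := hb hj2
    omega
  have hcard : ∀ k u, cnt (fun i => s (Nat.nth keep i)) k u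
      = ((Finset.range (Nat.nth keep k)).filter (fun j => keep j ∧ s j = u)).card := by
    intro k u
    unfold cnt
    apply Finset.card_bij (fun i _ => Nat.nth keep i)
    · intro i hi
      simp only [Finset.mem_filter, Finset.mem_range] at hi ⊢
      exact ⟨Nat.nth_strictMono hkinf hi.1, Nat.nth_mem_of_infinite hkinf i, hi.2⟩
    · intro i hi i' hi' hii
      exact (Nat.nth_strictMono hkinf).injective hii
    · intro b hb
      simp only [Finset.mem_filter, Finset.mem_range] at hb
      obtain ⟨hbJ, hbk, hbv⟩ := hb
      refine ⟨Nat.count keep b, ?_, Nat.nth_count hbk⟩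
      simp only [Finset.mem_filter, Finset.mem_range]
      constructor
      · have h1 : Nat.count keep (b+1) = Nat.count keep b + 1 := by
          rw [Nat.count_succ, if_pos hbk]
        have h2 : Nat.count keep (b+1) ≤ Nat.count keep (Nat.nth keep k) :=
          Nat.count_monotone keep hbJ
        have h3 : Nat.count keep (Nat.nth keep k) = k :=
          Nat.count_nth (fun hf => absurd hf hkinf)
        omega
      · rw [Nat.nth_count hbk]
        exact hbv
  have hcard2 : ∀ (n : ℕ) (u : V), ((Finset.range n).filter (fun j => keep j ∧ s j = u)).card
      = cnt s n u - min (cnt s n u) (zN u) := by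
    intro n u
    induction n with
    | zero => simp [cnt_zero]
    | succ n ih =>
      rw [Finset.range_add_one, Finset.filter_insert, cnt_succ]
      by_cases hsv : s n = u
      · by_cases hk : keep n
        · rw [if_pos ⟨hk, hsv⟩, Finset.card_insert_of_notMem (by simp), if_pos hsv]
          have hkn : zN u ≤ cnt s n u := by
            have hk' : zN (s n) ≤ cnt s n (s n) := hk
            rwa [hsv] at hk'
          omega
        · rw [if_neg (fun hc => hk hc.1), if_pos hsv]
          have hkn : ¬ zN u ≤ cnt s n u := by
            intro hc
            exact hk (show zN (s n) ≤ cnt s n (s n) by rwa [hsv])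
          omega
      · rw [if_neg (fun hc => hsv hc.2), if_neg hsv]
        omega
  refine ⟨fun i => s (Nat.nth keep i), ?_⟩
  intro k
  have hkJ : keep (Nat.nth keep k) := Nat.nth_mem_of_infinite hkinf k
  set J := Nat.nth keep k with hJ
  set dd : V → ℤ := fun u => min ((cnt s J u : ℤ)) (z u) with hdd
  have hcnteq : cntZ (fun i => s (Nat.nth keep i)) k = cntZ s J - dd := by
    funext u
    have h1 := (hcard k u).trans (hcard2 J u)
    have hmin : min (cnt s J u) (zN u) ≤ cnt s J u := min_le_left _ _
    simp only [cntZ, Pi.sub_apply, hdd]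
    rw [h1, Nat.cast_sub hmin, Nat.cast_min, hzcast]
  have hstate : gameState m (y + lap m z) (fun i => s (Nat.nth keep i)) k
      = gameState m y s J + lap m (z - dd) := by
    rw [gameState_eq m (y + lap m z) _ k, gameState_eq m y s J, hcnteq, lap_sub, lap_sub]
    abel
  have hlegJ := hs J
  have hddle : ∀ u, dd u ≤ z u := fun u => min_le_right _ _
  have hddv : dd (s J) = z (s J) := by
    have hc : z (s J) ≤ (cnt s J (s J) : ℤ) := by
      rw [← hzcast (s J)]
      exact_mod_cast hkJ
    simp only [hdd]
    exact min_eq_right hc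
  have hlapnn : 0 ≤ lap m (z - dd) (s J) := by
    simp only [lap, Pi.sub_apply]
    have h0 : outdeg m (s J) * (z (s J) - dd (s J)) = 0 := by rw [hddv]; ring
    rw [h0, sub_zero]
    apply Finset.sum_nonneg
    intro u _
    have h1 := hddle u
    have h2 : (0:ℤ) ≤ (m u (s J) : ℤ) := by positivity
    nlinarith
  show outdeg m (s J) ≤ gameState m (y + lap m z) (fun i => s (Nat.nth keep i)) k (s J)
  rw [hstate]
  simp only [Pi.add_apply]
  linarith

lemma lap_neg (m : V → V → ℕ) (z : V → ℤ) : lap m (fun v => - z v) = fun u => - lap m z u := by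
  have h : (fun v => - z v) = (0 : V → ℤ) - z := by funext v; simp
  rw [h, lap_sub, lap_zero]
  funext u; simp

lemma nonterm_of_eq (m : V → V → ℕ) (hconn : StronglyConnected m) (x y z : V → ℤ)
    (hx : x = y + lap m z) (hy : ¬ Terminating m y) : ¬ Terminating m x := by
  classical
  have hy' := hy
  rw [Terminating, not_not] at hy'
  obtain ⟨s, hs⟩ := hy'
  obtain ⟨p, hp1, hp2⟩ := exists_period m hconn y s hs
  set M : ℕ := Finset.univ.sup (fun v => (- z v).toNat) with hM
  set z' : V → ℤ := fun v => z v + (M:ℤ) * p v with hz'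
  have hz'nn : ∀ v, 0 ≤ z' v := by
    intro v
    have h1 : ((- z v).toNat : ℤ) ≤ (M:ℤ) := by
      exact_mod_cast Finset.le_sup (f := fun v => (- z v).toNat) (Finset.mem_univ v)
    have h2 : - z v ≤ ((- z v).toNat : ℤ) := Int.self_le_toNat _
    have h3 : (0:ℤ) ≤ (M:ℤ) := by positivity
    simp only [hz']
    nlinarith [hp1 v]
  have hlapz' : lap m z' = lap m z := by
    have he : z' = z + (fun v => (M:ℤ) * p v) := rfl
    rw [he, lap_add, lap_smul, hp2]
    funext u; simp
  have hfin := nonterm_shift m hconn y z' hz'nn hy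
  rwa [hlapz', ← hx] at hfin

lemma nonterm_iff (m : V → V → ℕ) (hconn : StronglyConnected m) (x y : V → ℤ)
    (z : V → ℤ) (hx : x = y + lap m z) :
    (¬ Terminating m x) ↔ (¬ Terminating m y) := by
  constructor
  · intro h
    refine nonterm_of_eq m hconn y x (fun v => - z v) ?_ h
    rw [lap_neg]
    funext u
    have := congrFun hx u
    simp only [Pi.add_apply] at this ⊢
    omega
  · exact nonterm_of_eq m hconn x y z hx

end ChipAux

/-- Linearly equivalent chip-distributions on a strongly connected digraph have equal
distance from the non-terminating distributions. -/
theorem chipDist_eq_of_linEquiv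
    {V : Type} [Fintype V] [DecidableEq V] [Nonempty V]
    (m : V → V → ℕ) (hloop : Loopless m) (hconn : StronglyConnected m)
    (x y : V → ℤ) (hxy : LinEquiv m x y) :
    chipDist m x = chipDist m y := by
  obtain ⟨z, hz⟩ := hxy
  have key : ∀ w : V → ℤ, (¬ Terminating m (x + w)) ↔ (¬ Terminating m (y + w)) := by
    intro w
    refine ChipAux.nonterm_iff m hconn (x + w) (y + w) z ?_
    funext u
    have := congrFun hz u
    simp only [Pi.add_apply] at this ⊢
    omega
  unfold chipDist
  congr 1
  ext n
  simp only [Set.mem_setOf_eq]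
  constructor
  · rintro ⟨w, h1, h2, h3⟩; exact ⟨w, h1, h2, (key w).mp h3⟩
  · rintro ⟨w, h1, h2, h3⟩; exact ⟨w, h1, h2, (key w).mpr h3⟩
end

section
/- Let G be a digraph (finite loopless directed multigraph). Every inclusion-minimal feedback arc set of G is also a turnback arc set of G; that is, if F is a set of edges such that deleting F makes G acyclic but deleting any proper subset of F does not, then reversing the edges of F in G yields an acyclic digraph. -/
open Finset

variable {V : Type} [Fintype V] [DecidableEq V]

/-- A multidigraph (given by its multiplicity function) is acyclic if it has no directed cycle,
i.e. no vertex can reach itself by a directed walk of positive length. -/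
def AcyclicMul (k : V → V → ℕ) : Prop :=
  ∀ v : V, ¬ Relation.TransGen (fun a b => 0 < k a b) v v

section GallaiAux

variable {W : Type}

/-- If there is no `r`-path from `v` to `u`, then any path in `r` augmented by the
single extra edge `u → v` decomposes. -/
private lemma gallai_reach_aug {r : W → W → Prop} {u v : W} :
    ∀ {a b : W}, Relation.ReflTransGen (fun x y => r x y ∨ (x = u ∧ y = v)) a b →
      Relation.ReflTransGen r a b ∨
        (Relation.ReflTransGen r a u ∧
          Relation.ReflTransGen (fun x y => r x y ∨ (x = u ∧ y = v)) v b) := by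
  intro a b h
  induction h with
  | refl => exact Or.inl .refl
  | tail _ hcb ih =>
    rcases hcb with hr | ⟨rfl, rfl⟩
    · rcases ih with h1 | ⟨h1, h2⟩
      · exact Or.inl (h1.tail hr)
      · exact Or.inr ⟨h1, h2.tail (Or.inl hr)⟩
    · rcases ih with h1 | ⟨h1, h2⟩
      · exact Or.inr ⟨h1, .refl⟩
      · exact Or.inr ⟨h1, .refl⟩

private lemma gallai_reach_aug' {r : W → W → Prop} {u v a b : W}
    (h : Relation.ReflTransGen (fun x y => r x y ∨ (x = u ∧ y = v)) a b) :
    Relation.ReflTransGen r a b ∨ Relation.ReflTransGen r a u := by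
  rcases gallai_reach_aug h with h1 | ⟨h1, _⟩
  · exact Or.inl h1
  · exact Or.inr h1

/-- Adding a single edge `u → v` to an acyclic relation keeps it acyclic,
provided there is no path from `v` back to `u`. -/
private lemma gallai_acyclic_aug {r : W → W → Prop} {u v : W}
    (hac : ∀ w, ¬ Relation.TransGen r w w)
    (hv : ¬ Relation.ReflTransGen r v u) :
    ∀ w, ¬ Relation.TransGen (fun x y => r x y ∨ (x = u ∧ y = v)) w w := by
  intro w hw
  obtain ⟨c, hwc, hcw⟩ := Relation.TransGen.head'_iff.mp hw
  rcases hwc with hr | ⟨rfl, rfl⟩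
  · rcases gallai_reach_aug hcw with h1 | ⟨h1, h2⟩
    · exact hac w (Relation.TransGen.head' hr h1)
    · rcases gallai_reach_aug' h2 with h3 | h3
      · exact hv ((h3.tail hr).trans h1)
      · exact hv h3
  · rcases gallai_reach_aug' hcw with h1 | h1
    · exact hv h1
    · exact hv h1

end GallaiAux

/-- **Gallai**: an inclusion-minimal feedback arc set of a digraph is a turnback arc set:
if deleting `F` makes the digraph acyclic but deleting any proper subset of `F` does not,
then reversing the edges of `F` yields an acyclic digraph. -/
theorem minimal_fas_is_turnback
    {V : Type} [Fintype V] [DecidableEq V]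
    (m : V → V → ℕ) (hloop : Loopless m)
    (F : V → V → ℕ) (hF : ∀ u v, F u v ≤ m u v)
    (hfas : AcyclicMul (fun u v => m u v - F u v))
    (hmin : ∀ F' : V → V → ℕ, (∀ u v, F' u v ≤ F u v) → F' ≠ F →
        ¬ AcyclicMul (fun u v => m u v - F' u v)) :
    AcyclicMul (fun u v => m u v - F u v + F v u) := by
  set rel : V → V → Prop := fun a b => 0 < m a b - F a b with hrel
  -- Key: for every edge (u,v) of F there is a path v → u in G − F.
  have key : ∀ u v : V, 0 < F u v → Relation.ReflTransGen rel v u := by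
    intro u v hFuv
    by_contra hnot
    set F' : V → V → ℕ := fun a b => if a = u ∧ b = v then F u v - 1 else F a b with hF'
    have hle : ∀ a b, F' a b ≤ F a b := by
      intro a b
      simp only [hF']
      split
      · rename_i h
        obtain ⟨rfl, rfl⟩ := h
        omega
      · exact le_refl _
    have hne : F' ≠ F := by
      intro h
      have := congrFun (congrFun h u) v
      simp only [hF', and_self, if_true] at this
      omega
    apply hmin F' hle hne
    intro w hw
    have hmono : ∀ a b : V, (0 < m a b - F' a b) → (rel a b ∨ (a = u ∧ b = v)) := by
      intro a b hab
      by_cases h : a = u ∧ b = v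
      · exact Or.inr h
      · left
        simp only [hF', if_neg h] at hab
        exact hab
    exact gallai_acyclic_aug hfas hnot w (Relation.TransGen.mono hmono w w hw)
  -- Every edge of the reversed graph yields a path in G − F of positive length.
  have step : ∀ a b : V, 0 < m a b - F a b + F b a → Relation.TransGen rel a b := by
    intro a b hab
    have hne : a ≠ b := by
      rintro rfl
      have h0 := hloop a
      have h1 := hF a a
      omega
    by_cases h : 0 < m a b - F a b
    · exact Relation.TransGen.single h
    · have hFba : 0 < F b a := by omega
      have := key b a hFba
      rcases (Relation.reflTransGen_iff_eq_or_transGen.mp this) with h1 | h1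
      · exact absurd h1.symm hne
      · exact h1
  intro w hw
  have lift : ∀ {a b : V},
      Relation.TransGen (fun x y => 0 < m x y - F x y + F y x) a b →
        Relation.TransGen rel a b := by
    intro a b h
    induction h with
    | single hs => exact step _ _ hs
    | tail _ hs ih => exact ih.trans (step _ _ hs)
  exact hfas w (lift hw)
end

section
/- Let G be an Eulerian digraph and let T ⊆ E(G) be a turnback arc set of G. Denote by d⁻_T(v) the indegree of vertex v in the digraph (V, T). Then every chip-distribution x on G satisfying x(v) ≥ d⁻_T(v) for every vertex v is non-terminating. -/
open Finset

variable {V : Type} [Fintype V] [DecidableEq V]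

theorem gameState_eq_s9 (m : V → V → ℕ) (x : V → ℤ) (s : ℕ → V) (i : ℕ) (u : V) :
    gameState m x s i u = x u + (∑ j ∈ Finset.range i, (m (s j) u : ℤ))
      - ∑ j ∈ Finset.range i, (if u = s j then outdeg m u else 0) := by
  induction i with
  | zero => simp [gameState]
  | succ k ih =>
    simp only [gameState, fire, Finset.sum_range_succ, ih]
    rcases eq_or_ne u (s k) with h | h
    · simp [h]; ring
    · simp [h]; ring

/-- On an Eulerian digraph, any chip-distribution dominating the indegree vector of a
turnback arc set is non-terminating. -/
theorem nonterminating_of_ge_turnback_indeg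
    {V : Type} [Fintype V] [DecidableEq V] [Nonempty V]
    (m : V → V → ℕ) (hloop : Loopless m) (hconn : StronglyConnected m)
    (heul : ∀ v, outdeg m v = indeg m v)
    (T : V → V → ℕ) (hT : ∀ u v, T u v ≤ m u v)
    (hTturn : AcyclicMul (fun u v => m u v - T u v + T v u))
    (x : V → ℤ) (hx : ∀ v, (∑ u, (T u v : ℤ)) ≤ x v) :
    ¬ Terminating m x := by
  classical
  set n := Fintype.card V with hn
  have hn0 : 0 < n := Fintype.card_pos
  set r0 : V → V → Prop := fun a b => 0 < m a b - T a b + T b a with hr0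
  set rr : V → V → Prop := Relation.TransGen r0 with hrr
  have hirr : ∀ v, ¬ rr v v := hTturn
  set p : V → V → Prop := fun a b => a = b ∨ rr a b with hp
  haveI hpo : IsPartialOrder V p :=
    { refl := fun a => Or.inl rfl
      trans := by
        rintro a b c (rfl | hab) (rfl | hbc)
        · exact Or.inl rfl
        · exact Or.inr hbc
        · exact Or.inr hab
        · exact Or.inr (hab.trans hbc)
      antisymm := by
        rintro a b (rfl | hab) (h | hba)
        · rfl
        · rfl
        · exact h.symm
        · exact absurd (hab.trans hba) (hirr a) }
  obtain ⟨t, htlin, hpt⟩ := extend_partialOrder p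
  haveI := htlin
  set t' : V → V → Prop := fun a b => t a b ∧ a ≠ b with ht'
  haveI hsto : IsStrictTotalOrder V t' :=
    { trichotomous := by
        intro a b hn1 hn2
        by_cases hab : a = b
        · exact hab
        · rcases total_of t a b with h | h
          · exact (hn1 ⟨h, hab⟩).elim
          · exact (hn2 ⟨h, Ne.symm hab⟩).elim
      irrefl := fun a h => h.2 rfl
      trans := by
        rintro a b c ⟨hab, hab'⟩ ⟨hbc, hbc'⟩
        refine ⟨_root_.trans hab hbc, fun h => ?_⟩
        subst h
        exact hab' (antisymm hab hbc) }
  letI L : LinearOrder V := linearOrderOfSTO t'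
  set e : Fin n ≃o V := monoEquivOfFin V hn.symm with he
  -- key : later-fired vertices only send T-edges to earlier ones
  have key : ∀ (i j : Fin n), i ≤ j → (m (e j) (e i) : ℤ) ≤ (T (e j) (e i) : ℤ) := by
    intro i j hij
    rcases eq_or_lt_of_le hij with h | h
    · subst h
      have h1 := hloop (e i)
      have h2 := hT (e i) (e i)
      have : m (e i) (e i) ≤ T (e i) (e i) := by omega
      exact_mod_cast this
    · by_contra hc
      push_neg at hc
      have hmT : T (e j) (e i) < m (e j) (e i) := by exact_mod_cast hc
      have hk : r0 (e j) (e i) := by rw [hr0]; dsimp only; omega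
      have h1 : t' (e j) (e i) := by
        refine ⟨hpt _ _ (Or.inr (Relation.TransGen.single hk)), fun hh => ?_⟩
        have hcyc : rr (e j) (e i) := Relation.TransGen.single hk
        rw [hh] at hcyc
        exact hirr (e i) hcyc
      have h2 : t' (e i) (e j) := e.strictMono h
      exact h1.2 (antisymm (r := t) h1.1 h2.1)
  set s : ℕ → V := fun i => e ⟨i % n, Nat.mod_lt _ hn0⟩ with hs
  have hsval : ∀ (j : ℕ) (hj : j < n), s j = e ⟨j, hj⟩ := by
    intro j hj
    rw [hs]; dsimp only; congr 1; exact Fin.ext (Nat.mod_eq_of_lt hj)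
  have hsper : ∀ j, s (n + j) = s j := by
    intro j
    rw [hs]; dsimp only; congr 1; exact Fin.ext (Nat.add_mod_left n j)
  have hsum0 : ∀ (f : V → ℤ), (∑ j ∈ Finset.range n, f (s j)) = ∑ w, f w := by
    intro f
    calc ∑ j ∈ Finset.range n, f (s j)
        = ∑ t : Fin n, f (s t.val) := (Fin.sum_univ_eq_sum_range (fun j => f (s j)) n).symm
      _ = ∑ t : Fin n, f (e t) := by
          refine Finset.sum_congr rfl fun tt _ => ?_
          rw [hsval tt.val tt.isLt]
      _ = ∑ w, f w := Equiv.sum_comp e.toEquiv f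
  have hbase : gameState m x s n = x := by
    funext u
    rw [gameState_eq_s9]
    have h1 : (∑ j ∈ Finset.range n, (m (s j) u : ℤ)) = outdeg m u := by
      rw [hsum0 (fun w => (m w u : ℤ))]
      rw [heul u]; rfl
    have h2 : (∑ j ∈ Finset.range n, (if u = s j then outdeg m u else 0)) = outdeg m u := by
      rw [hsum0 (fun w => if u = w then outdeg m u else 0)]
      simp
    rw [h1, h2]; ring
  have hper : ∀ i, gameState m x s (n + i) = gameState m x s i := by
    intro i
    induction i with
    | zero => exact hbase
    | succ i ih =>
      show fire m (gameState m x s (n + i)) (s (n + i)) = fire m (gameState m x s i) (s i)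
      rw [ih, hsper i]
  have hleg : ∀ (i : ℕ), i < n → outdeg m (s i) ≤ gameState m x s i (s i) := by
    intro i hi
    rw [gameState_eq_s9]
    have hzero : (∑ j ∈ Finset.range i, (if s i = s j then outdeg m (s i) else 0)) = 0 := by
      refine Finset.sum_eq_zero fun j hj => ?_
      rw [Finset.mem_range] at hj
      have hjn : j < n := lt_trans hj hi
      rw [if_neg]
      rw [hsval i hi, hsval j hjn]
      intro hh
      have := e.injective hh
      rw [Fin.mk.injEq] at this
      omega
    rw [hzero]
    have hout : outdeg m (s i) = ∑ j ∈ Finset.range n, (m (s j) (s i) : ℤ) := by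
      rw [hsum0 (fun w => (m w (s i) : ℤ)), heul (s i)]; rfl
    have hsplit : (∑ j ∈ Finset.range n, (m (s j) (s i) : ℤ))
        = (∑ j ∈ Finset.range i, (m (s j) (s i) : ℤ))
          + ∑ j ∈ Finset.Ico i n, (m (s j) (s i) : ℤ) := by
      simp only [Finset.range_eq_Ico]
      exact (Finset.sum_Ico_consecutive _ (Nat.zero_le i) (le_of_lt hi)).symm
    have htail : (∑ j ∈ Finset.Ico i n, (m (s j) (s i) : ℤ)) ≤ x (s i) := by
      have step1 : (∑ j ∈ Finset.Ico i n, (m (s j) (s i) : ℤ))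
          ≤ ∑ j ∈ Finset.Ico i n, (T (s j) (s i) : ℤ) := by
        refine Finset.sum_le_sum fun j hj => ?_
        rw [Finset.mem_Ico] at hj
        rw [hsval i hi, hsval j hj.2]
        exact key ⟨i, hi⟩ ⟨j, hj.2⟩ hj.1
      have step2 : (∑ j ∈ Finset.Ico i n, (T (s j) (s i) : ℤ))
          ≤ ∑ j ∈ Finset.range n, (T (s j) (s i) : ℤ) := by
        refine Finset.sum_le_sum_of_subset_of_nonneg ?_ (fun j _ _ => by positivity)
        rw [Finset.range_eq_Ico]
        exact Finset.Ico_subset_Ico (Nat.zero_le i) le_rfl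
      have step3 : (∑ j ∈ Finset.range n, (T (s j) (s i) : ℤ)) = ∑ u, (T u (s i) : ℤ) :=
        hsum0 (fun w => (T w (s i) : ℤ))
      calc (∑ j ∈ Finset.Ico i n, (m (s j) (s i) : ℤ)) ≤ _ := step1
        _ ≤ _ := step2
        _ = _ := step3
        _ ≤ x (s i) := hx (s i)
    rw [hout, hsplit]
    linarith
  intro hterm
  refine hterm ⟨s, ?_⟩
  intro i
  induction i using Nat.strong_induction_on with
  | _ i ih =>
    rcases lt_or_ge i n with h | h
    · exact hleg i h
    · obtain ⟨j, rfl⟩ : ∃ j, i = n + j := ⟨i - n, by omega⟩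
      rw [hsper j, hper j]
      exact ih j (by omega)
end
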